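/- arXiv:2302.08033 — 8 statements merged into one kernel-verified Lean document; each statement's English description precedes it below -/
import Mathlib

section
/- For every integer N ≥ 2 and all v, w ∈ V_h^(1), the discrete Green's formula (−Δ_h v, w)_{V¹} = (δ⁻₁ v, δ⁻₁ w)_{M} + (δ⁻₂ v, δ⁻₂ w)_{W¹} holds, where Δ_h v is evaluated at the nodes (i, j−1/2), 1 ≤ i ≤ N−1, 1 ≤ j ≤ N, δ⁻₁ v at the nodes (i−1/2, j−1/2), 1 ≤ i,j ≤ N, and δ⁻₂ v at the nodes (i,j), 1 ≤ i ≤ N−1, 0 ≤ j ≤ N. -/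
open Finset

noncomputable section

/-- mesh size `h = 1/N` -/
def gh (N : ℕ) : ℝ := 1 / (N : ℝ)

/-- weights `ρ_0 = ρ_N = 1/2`, `ρ_k = 1` otherwise -/
def rho (N k : ℕ) : ℝ := if k = 0 ∨ k = N then 1/2 else 1

/-- membership in `V_h^(1)`: `v i j` denotes `v_{i, j-1/2}` for `0 ≤ i ≤ N`, `0 ≤ j ≤ N+1`
(index `j` corresponds to the half-integer ordinate `j - 1/2`). -/
def inV1 (N : ℕ) (v : ℕ → ℕ → ℝ) : Prop :=
  (∀ j, v 0 j = 0) ∧ (∀ j, v N j = 0) ∧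
  (∀ i, v i 0 = - v i 1) ∧ (∀ i, v i (N+1) = - v i N)

/-- membership in `V_h^(2)`: `v i j` denotes `v_{i-1/2, j}` for `0 ≤ i ≤ N+1`, `0 ≤ j ≤ N`. -/
def inV2 (N : ℕ) (v : ℕ → ℕ → ℝ) : Prop :=
  (∀ i, v i 0 = 0) ∧ (∀ i, v i N = 0) ∧
  (∀ j, v 0 j = - v 1 j) ∧ (∀ j, v (N+1) j = - v N j)

/-- membership in `M_h`: `q i j` denotes `q_{i-1/2, j-1/2}` for `1 ≤ i, j ≤ N`, discrete mean zero. -/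
def inM (N : ℕ) (q : ℕ → ℕ → ℝ) : Prop :=
  ∑ i ∈ Icc 1 N, ∑ j ∈ Icc 1 N, q i j = 0

/-- `(·,·)_{M_h}` inner product (cell centers `1 ≤ i, j ≤ N`). -/
def innerM (N : ℕ) (q r : ℕ → ℕ → ℝ) : ℝ :=
  gh N ^ 2 * ∑ i ∈ Icc 1 N, ∑ j ∈ Icc 1 N, q i j * r i j

/-- `(·,·)_{V_h^(1)}` inner product (nodes `(i, j-1/2)`, `1 ≤ i ≤ N-1`, `1 ≤ j ≤ N`). -/
def innerV1 (N : ℕ) (v w : ℕ → ℕ → ℝ) : ℝ :=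
  gh N ^ 2 * ∑ i ∈ Icc 1 (N-1), ∑ j ∈ Icc 1 N, v i j * w i j

/-- `(·,·)_{V_h^(2)}` inner product (nodes `(i-1/2, j)`, `1 ≤ i ≤ N`, `1 ≤ j ≤ N-1`). -/
def innerV2 (N : ℕ) (v w : ℕ → ℕ → ℝ) : ℝ :=
  gh N ^ 2 * ∑ i ∈ Icc 1 N, ∑ j ∈ Icc 1 (N-1), v i j * w i j

/-- `(·,·)_{W_h^(1)}` inner product (vertices `1 ≤ i ≤ N-1`, `0 ≤ j ≤ N`, weights `ρ_j`). -/
def innerW1 (N : ℕ) (v w : ℕ → ℕ → ℝ) : ℝ :=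
  gh N ^ 2 * ∑ i ∈ Icc 1 (N-1), ∑ j ∈ Icc 0 N, rho N j * (v i j * w i j)

/-- `(·,·)_{W_h^(2)}` inner product (vertices `0 ≤ i ≤ N`, `1 ≤ j ≤ N-1`, weights `ρ_i`). -/
def innerW2 (N : ℕ) (v w : ℕ → ℕ → ℝ) : ℝ :=
  gh N ^ 2 * ∑ i ∈ Icc 0 N, ∑ j ∈ Icc 1 (N-1), rho N i * (v i j * w i j)

/-- `δ⁻₁` of a `V_h^(1)` function, evaluated at the cell center `(i-1/2, j-1/2)`. -/
def d1V1 (N : ℕ) (v : ℕ → ℕ → ℝ) : ℕ → ℕ → ℝ := fun i j => (v i j - v (i-1) j) / gh N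

/-- `δ⁻₂` of a `V_h^(1)` function, evaluated at the vertex `(i, j)`. -/
def d2V1 (N : ℕ) (v : ℕ → ℕ → ℝ) : ℕ → ℕ → ℝ := fun i j => (v i (j+1) - v i j) / gh N

/-- `δ⁻₁` of a `V_h^(2)` function, evaluated at the vertex `(i, j)`. -/
def d1V2 (N : ℕ) (v : ℕ → ℕ → ℝ) : ℕ → ℕ → ℝ := fun i j => (v (i+1) j - v i j) / gh N

/-- `δ⁻₂` of a `V_h^(2)` function, evaluated at the cell center `(i-1/2, j-1/2)`. -/
def d2V2 (N : ℕ) (v : ℕ → ℕ → ℝ) : ℕ → ℕ → ℝ := fun i j => (v i j - v i (j-1)) / gh N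

/-- `δ⁺₁` of a cell-centered function, evaluated at the node `(i, j-1/2)`. -/
def d1pM (N : ℕ) (q : ℕ → ℕ → ℝ) : ℕ → ℕ → ℝ := fun i j => (q (i+1) j - q i j) / gh N

/-- `δ⁺₂` of a cell-centered function, evaluated at the node `(i-1/2, j)`. -/
def d2pM (N : ℕ) (q : ℕ → ℕ → ℝ) : ℕ → ℕ → ℝ := fun i j => (q i (j+1) - q i j) / gh N

/-- the five-point discrete Laplacian `Δ_h = δ⁺₁δ⁻₁ + δ⁺₂δ⁻₂`. -/
def lap (N : ℕ) (v : ℕ → ℕ → ℝ) : ℕ → ℕ → ℝ := fun i j =>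
  (v (i+1) j - 2 * v i j + v (i-1) j) / gh N ^ 2
    + (v i (j+1) - 2 * v i j + v i (j-1)) / gh N ^ 2

/-- squared discrete `H¹` seminorm
`|v|₁² = ‖δ⁻₁v¹‖²_M + ‖δ⁻₂v¹‖²_{W¹} + ‖δ⁻₁v²‖²_{W²} + ‖δ⁻₂v²‖²_M`. -/
def H1semisq (N : ℕ) (v1 v2 : ℕ → ℕ → ℝ) : ℝ :=
  innerM N (d1V1 N v1) (d1V1 N v1) + innerW1 N (d2V1 N v1) (d2V1 N v1)
    + innerW2 N (d1V2 N v2) (d1V2 N v2) + innerM N (d2V2 N v2) (d2V2 N v2)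

/-- discrete `H¹` seminorm `|v|₁`. -/
def H1semi (N : ℕ) (v1 v2 : ℕ → ℕ → ℝ) : ℝ := Real.sqrt (H1semisq N v1 v2)

/-- `(e¹, e², e_p)` satisfies the discrete MAC Stokes system with residuals `(R¹, R², R)`. -/
def StokesSys (N : ℕ) (e1 e2 ep R1 R2 R : ℕ → ℕ → ℝ) : Prop :=
  (∀ i ∈ Icc 1 (N-1), ∀ j ∈ Icc 1 N, -lap N e1 i j + d1pM N ep i j = R1 i j) ∧
  (∀ i ∈ Icc 1 N, ∀ j ∈ Icc 1 (N-1), -lap N e2 i j + d2pM N ep i j = R2 i j) ∧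
  (∀ i ∈ Icc 1 N, ∀ j ∈ Icc 1 N, d1V1 N e1 i j + d2V2 N e2 i j = R i j)

lemma icc_to_range (m n : ℕ) (f : ℕ → ℝ) :
    ∑ i ∈ Icc m n, f i = ∑ i ∈ range (n+1-m), f (m+i) := by
  rw [← Finset.Ico_add_one_right_eq_Icc, Finset.sum_Ico_eq_sum_range]

lemma abel_sum (f g : ℕ → ℝ) (M : ℕ) :
    ∑ i ∈ range M, (f (i+1) - f i) * (g (i+1) - g i)
      + ∑ i ∈ range M, (f (i+1+1) - 2 * f (i+1) + f i) * g (i+1)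
      = (f (M+1) - f M) * g M - (f 1 - f 0) * g 0 := by
  induction M with
  | zero => simp
  | succ M ih => rw [sum_range_succ, sum_range_succ]; linear_combination ih

lemma dir (N : ℕ) (hN : 2 ≤ N) (f g : ℕ → ℝ) (hf0 : f 0 = 0) (hfN : f N = 0)
    (hg0 : g 0 = 0) (hgN : g N = 0) :
    ∑ i ∈ Icc 1 (N-1), -((f (i+1) - 2 * f i + f (i-1)) * g i)
      = ∑ i ∈ Icc 1 N, (f i - f (i-1)) * (g i - g (i-1)) := by
  obtain ⟨M, rfl⟩ : ∃ M, N = M + 1 := ⟨N - 1, by omega⟩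
  rw [icc_to_range, icc_to_range]
  simp only [show ∀ k : ℕ, 1 + k = k + 1 from fun k => by omega, Nat.add_sub_cancel]
  rw [sum_range_succ, sum_neg_distrib]
  have A := abel_sum f g M
  linear_combination -A - g (M+1) * hfN + f M * hgN + (f 1 - f 0) * hg0

lemma neu (N : ℕ) (hN : 2 ≤ N) (a b : ℕ → ℝ) (ha0 : a 0 = -a 1) (haN : a (N+1) = -a N)
    (hb0 : b 0 = -b 1) (hbN : b (N+1) = -b N) :
    ∑ j ∈ Icc 1 N, -((a (j+1) - 2 * a j + a (j-1)) * b j)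
      = ∑ j ∈ Icc 0 N, rho N j * ((a (j+1) - a j) * (b (j+1) - b j)) := by
  obtain ⟨M, rfl⟩ : ∃ M, N = M + 1 + 1 := ⟨N - 2, by omega⟩
  rw [icc_to_range, icc_to_range]
  simp only [show ∀ k : ℕ, 1 + k = k + 1 from fun k => by omega, Nat.add_sub_cancel,
    Nat.zero_add, Nat.sub_zero]
  conv_lhs => rw [Finset.sum_range_succ']
  conv_rhs => rw [Finset.sum_range_succ, Finset.sum_range_succ']
  have hrho0 : rho (M+1+1) 0 = 1/2 := by simp [rho]
  have hrhoN : rho (M+1+1) (M+1+1) = 1/2 := by simp [rho]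
  rw [hrho0, hrhoN]
  have hmid : ∑ k ∈ range (M+1),
        rho (M+1+1) (k+1) * ((a (k+1+1) - a (k+1)) * (b (k+1+1) - b (k+1)))
      = ∑ k ∈ range (M+1), (a (k+1+1) - a (k+1)) * (b (k+1+1) - b (k+1)) := by
    refine sum_congr rfl fun k hk => ?_
    simp only [mem_range] at hk
    have h1 : rho (M+1+1) (k+1) = 1 := by
      simp only [rho]; rw [if_neg (by omega)]
    rw [h1, one_mul]
  have A := abel_sum (fun k => a (k+1)) (fun k => b (k+1)) (M+1)
  simp only [Nat.zero_add] at A ⊢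
  rw [hmid] at *
  rw [sum_neg_distrib]
  rw [ha0, haN, hb0, hbN]
  rw [haN] at A
  linear_combination -A

/-- discrete Green's formula
`(−Δ_h v, w)_{V¹} = (δ⁻₁ v, δ⁻₁ w)_{M} + (δ⁻₂ v, δ⁻₂ w)_{W¹}`. -/
theorem discrete_green_formula_3 (N : ℕ) (hN : 2 ≤ N)
    (v w : ℕ → ℕ → ℝ) (hv : inV1 N v) (hw : inV1 N w) :
    innerV1 N (fun i j => -lap N v i j) w
      = innerM N (d1V1 N v) (d1V1 N w) + innerW1 N (d2V1 N v) (d2V1 N w) := by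
  obtain ⟨hv0, hvN, hvb, hvt⟩ := hv
  obtain ⟨hw0, hwN, hwb, hwt⟩ := hw
  have hNne : (N : ℝ) ≠ 0 := Nat.cast_ne_zero.mpr (by omega)
  have hh : gh N ≠ 0 := one_div_ne_zero hNne
  have L : innerV1 N (fun i j => -lap N v i j) w
      = ∑ i ∈ Icc 1 (N-1), ∑ j ∈ Icc 1 N,
          (-((v (i+1) j - 2 * v i j + v (i-1) j) * w i j)
            + -((v i (j+1) - 2 * v i j + v i (j-1)) * w i j)) := by
    unfold innerV1 lap
    rw [mul_sum]
    refine sum_congr rfl fun i _ => ?_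
    rw [mul_sum]
    refine sum_congr rfl fun j _ => ?_
    field_simp
    ring
  have R1 : innerM N (d1V1 N v) (d1V1 N w)
      = ∑ i ∈ Icc 1 N, ∑ j ∈ Icc 1 N, (v i j - v (i-1) j) * (w i j - w (i-1) j) := by
    unfold innerM d1V1
    rw [mul_sum]
    refine sum_congr rfl fun i _ => ?_
    rw [mul_sum]
    refine sum_congr rfl fun j _ => ?_
    field_simp
  have R2 : innerW1 N (d2V1 N v) (d2V1 N w)
      = ∑ i ∈ Icc 1 (N-1), ∑ j ∈ Icc 0 N,
          rho N j * ((v i (j+1) - v i j) * (w i (j+1) - w i j)) := by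
    unfold innerW1 d2V1
    rw [mul_sum]
    refine sum_congr rfl fun i _ => ?_
    rw [mul_sum]
    refine sum_congr rfl fun j _ => ?_
    field_simp
  rw [L, R1, R2]
  simp only [sum_add_distrib]
  congr 1
  · rw [sum_comm]
    conv_rhs => rw [sum_comm]
    refine sum_congr rfl fun j _ => ?_
    exact dir N hN (fun i => v i j) (fun i => w i j) (hv0 j) (hvN j) (hw0 j) (hwN j)
  · refine sum_congr rfl fun i _ => ?_
    exact neu N hN (v i) (w i) (hvb i) (hvt i) (hwb i) (hwt i)
end
end

section
/- There exists a constant C₁ > 0, independent of N, such that for every integer N ≥ 2 and every v ∈ V_h^(1), the discrete Poincaré inequality ‖v‖²_{V¹} ≤ C₁ ( ‖δ⁻₁ v‖²_{M} + ‖δ⁻₂ v‖²_{W¹} ) holds. -/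
open Finset

noncomputable section

lemma tele_aux (v : ℕ → ℝ) (h0 : v 0 = 0) (i : ℕ) :
    v i = ∑ k ∈ Icc 1 i, (v k - v (k-1)) := by
  induction i with
  | zero => simp [h0]
  | succ n ih =>
    rw [Finset.sum_Icc_succ_top (by omega), ← ih]
    simp

lemma sq_bd_aux (v : ℕ → ℝ) (h0 : v 0 = 0) (N i : ℕ) (hi : i ≤ N) :
    (v i)^2 ≤ (N:ℝ) * ∑ k ∈ Icc 1 N, (v k - v (k-1))^2 := by
  have hcs := sq_sum_le_card_mul_sum_sq (s := Icc 1 i) (f := fun k => v k - v (k-1))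
  rw [← tele_aux v h0 i] at hcs
  refine hcs.trans ?_
  have hcard : (#(Icc 1 i) : ℝ) = i := by simp
  rw [hcard]
  have hsub : ∑ k ∈ Icc 1 i, (v k - v (k-1))^2 ≤ ∑ k ∈ Icc 1 N, (v k - v (k-1))^2 :=
    Finset.sum_le_sum_of_subset_of_nonneg (Finset.Icc_subset_Icc_right hi)
      (fun _ _ _ => sq_nonneg _)
  have hsN : (0:ℝ) ≤ ∑ k ∈ Icc 1 N, (v k - v (k-1))^2 :=
    Finset.sum_nonneg fun _ _ => sq_nonneg _
  calc (i:ℝ) * ∑ k ∈ Icc 1 i, (v k - v (k-1))^2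
      ≤ (i:ℝ) * ∑ k ∈ Icc 1 N, (v k - v (k-1))^2 :=
        mul_le_mul_of_nonneg_left hsub (by positivity)
    _ ≤ (N:ℝ) * ∑ k ∈ Icc 1 N, (v k - v (k-1))^2 :=
        mul_le_mul_of_nonneg_right (by exact_mod_cast hi) hsN

/-- discrete Poincaré inequality on `V_h^(1)`:
`‖v‖²_{V¹} ≤ C₁ (‖δ⁻₁ v‖²_{M} + ‖δ⁻₂ v‖²_{W¹})` with `C₁` independent of `N`. -/
theorem discrete_poincare_1 :
    ∃ C₁ : ℝ, 0 < C₁ ∧ ∀ N : ℕ, 2 ≤ N → ∀ v : ℕ → ℕ → ℝ, inV1 N v →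
      innerV1 N v v
        ≤ C₁ * (innerM N (d1V1 N v) (d1V1 N v) + innerW1 N (d2V1 N v) (d2V1 N v)) := by
  refine ⟨1, one_pos, ?_⟩
  intro N hN v hv
  have hNpos : (0:ℝ) < N := by positivity
  have hN0 : (N:ℝ) ≠ 0 := ne_of_gt hNpos
  have hh : gh N = 1 / (N:ℝ) := rfl
  have hhpos : 0 < gh N := by rw [hh]; positivity
  set T : ℕ → ℝ := fun j => ∑ k ∈ Icc 1 N, (v k j - v (k-1) j)^2 with hT
  have hTnn : ∀ j, 0 ≤ T j := fun j => Finset.sum_nonneg fun _ _ => sq_nonneg _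
  -- innerM equals ∑ j, T j
  have hM : innerM N (d1V1 N v) (d1V1 N v) = ∑ j ∈ Icc 1 N, T j := by
    rw [innerM, Finset.sum_comm]
    rw [Finset.mul_sum]
    refine Finset.sum_congr rfl fun j _ => ?_
    rw [hT, Finset.mul_sum]
    refine Finset.sum_congr rfl fun i _ => ?_
    simp only [d1V1]
    field_simp
  -- innerW1 nonneg
  have hW : 0 ≤ innerW1 N (d2V1 N v) (d2V1 N v) := by
    refine mul_nonneg (by positivity) (Finset.sum_nonneg fun i _ =>
      Finset.sum_nonneg fun j _ => ?_)
    have : 0 ≤ rho N j := by unfold rho; split <;> norm_num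
    exact mul_nonneg this (mul_self_nonneg _)
  -- bound innerV1
  have key : innerV1 N v v ≤ ∑ j ∈ Icc 1 N, T j := by
    have hbd : ∀ i ∈ Icc 1 (N-1), ∀ j ∈ Icc 1 N, (v i j)^2 ≤ (N:ℝ) * T j := by
      intro i hi j _
      exact sq_bd_aux (fun k => v k j) (hv.1 j) N i (by simp at hi; omega)
    have hsum : ∑ i ∈ Icc 1 (N-1), ∑ j ∈ Icc 1 N, v i j * v i j
        ≤ ∑ i ∈ Icc 1 (N-1), ∑ j ∈ Icc 1 N, (N:ℝ) * T j := by
      refine Finset.sum_le_sum fun i hi => Finset.sum_le_sum fun j hj => ?_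
      have := hbd i hi j hj
      nlinarith [this]
    have hconst : ∑ i ∈ Icc 1 (N-1), ∑ j ∈ Icc 1 N, (N:ℝ) * T j
        = ((N:ℝ)-1) * ((N:ℝ) * ∑ j ∈ Icc 1 N, T j) := by
      rw [Finset.sum_const, ← Finset.mul_sum, nsmul_eq_mul]
      congr 1
      have h1 : 1 ≤ N := by omega
      simp [Nat.card_Icc]
      push_cast [Nat.cast_sub h1]
      ring
    have hchain : innerV1 N v v ≤ gh N ^ 2 * (((N:ℝ)-1) * ((N:ℝ) * ∑ j ∈ Icc 1 N, T j)) := by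
      rw [innerV1]
      refine mul_le_mul_of_nonneg_left ?_ (by positivity)
      calc _ ≤ _ := hsum
        _ = _ := hconst
    refine hchain.trans ?_
    have hTs : 0 ≤ ∑ j ∈ Icc 1 N, T j := Finset.sum_nonneg fun j _ => hTnn j
    have h2 : gh N ^ 2 * (((N:ℝ)-1) * ((N:ℝ) * ∑ j ∈ Icc 1 N, T j))
        = (((N:ℝ)-1)/(N:ℝ)) * ∑ j ∈ Icc 1 N, T j := by
      rw [hh]; field_simp
    rw [h2]
    have : ((N:ℝ)-1)/(N:ℝ) ≤ 1 := by
      rw [div_le_one hNpos]; linarith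
    nlinarith [hTs, this]
  rw [one_mul, hM]
  linarith [hW, key]
end
end

section
/- Uniqueness for the discrete MAC Stokes system: for every integer N ≥ 2, if (u¹, u², p) ∈ V_h^(1) × V_h^(2) × M_h satisfies the discrete Stokes system with residuals (R¹, R², R) = (0, 0, 0), then every entry of u¹ and of u² is zero and every entry of p is zero. -/
open Finset

noncomputable section

private lemma sum_Icc_bot (f : ℕ → ℝ) (m : ℕ) (hm : 1 ≤ m) :
    ∑ i ∈ Icc 1 m, f i = f 1 + ∑ i ∈ Icc 2 m, f i := by
  rw [Finset.Icc_eq_cons_Ioc hm, Finset.sum_cons, ← Finset.Icc_add_one_left_eq_Ioc]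
  rfl

private lemma sbp_sq (a : ℕ → ℝ) (n : ℕ) :
    ∑ i ∈ Icc 1 (n+1), (a i - a (i-1))^2
      = (∑ i ∈ Icc 1 n, a i * (2*a i - a (i+1) - a (i-1)))
        + a (n+1) * (a (n+1) - a n) - a 0 * (a 1 - a 0) := by
  induction n with
  | zero => simp; ring
  | succ n ih =>
      rw [Finset.sum_Icc_succ_top (by omega : 1 ≤ n+1+1), ih,
        Finset.sum_Icc_succ_top (by omega : 1 ≤ n+1)]
      simp only [Nat.add_sub_cancel]
      ring

private lemma sbp_p (a q : ℕ → ℝ) (n : ℕ) :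
    ∑ i ∈ Icc 1 n, a i * (q (i+1) - q i)
      = -(∑ i ∈ Icc 1 (n+1), q i * (a i - a (i-1)))
        + q (n+1) * a (n+1) - q 1 * a 0 := by
  induction n with
  | zero => simp; ring
  | succ n ih =>
      rw [Finset.sum_Icc_succ_top (by omega : 1 ≤ n+1), ih,
        Finset.sum_Icc_succ_top (by omega : 1 ≤ n+1+1)]
      simp only [Nat.add_sub_cancel]
      ring

private lemma ghost_nonneg (b : ℕ → ℝ) (n : ℕ) (h0 : b 0 = -b 1) (hn : b (n+2) = -b (n+1)) :
    0 ≤ ∑ j ∈ Icc 1 (n+1), b j * (2*b j - b (j+1) - b (j-1)) := by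
  have h := sbp_sq b (n+1)
  rw [sum_Icc_bot _ (n+2) (by omega), Finset.sum_Icc_succ_top (by omega : 2 ≤ n+1+1)] at h
  simp only [Nat.add_sub_cancel] at h
  rw [h0, hn] at h
  have hs : 0 ≤ ∑ j ∈ Icc 2 (n+1), (b j - b (j-1))^2 :=
    Finset.sum_nonneg fun _ _ => sq_nonneg _
  nlinarith [sq_nonneg (b 1), sq_nonneg (b (n+1))]

private lemma dirich_eq (a : ℕ → ℝ) (n : ℕ) (h0 : a 0 = 0) (hn : a (n+1) = 0) :
    ∑ i ∈ Icc 1 n, a i * (2*a i - a (i+1) - a (i-1))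
      = ∑ i ∈ Icc 1 (n+1), (a i - a (i-1))^2 := by
  rw [sbp_sq, h0, hn]; ring

private lemma sq_zero {f : ℕ → ℕ → ℝ} {s t : Finset ℕ}
    (h : (∑ x ∈ s, ∑ y ∈ t, (f x y)^2) = 0) : ∀ x ∈ s, ∀ y ∈ t, f x y = 0 := by
  intro x hx y hy
  have h1 := (Finset.sum_eq_zero_iff_of_nonneg
    (fun x _ => Finset.sum_nonneg fun y _ => sq_nonneg _)).mp h x hx
  have h2 := (Finset.sum_eq_zero_iff_of_nonneg (fun y _ => sq_nonneg _)).mp h1 y hy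
  exact pow_eq_zero_iff (by norm_num) |>.mp h2

/-- uniqueness for the discrete MAC Stokes system: zero residuals force
the zero solution. -/
theorem discrete_stokes_uniqueness (N : ℕ) (hN : 2 ≤ N)
    (u1 u2 p : ℕ → ℕ → ℝ) (hu1 : inV1 N u1) (hu2 : inV2 N u2) (hp : inM N p)
    (hsys : StokesSys N u1 u2 p (fun _ _ => 0) (fun _ _ => 0) (fun _ _ => 0)) :
    (∀ i ≤ N, ∀ j ≤ N + 1, u1 i j = 0) ∧
    (∀ i ≤ N + 1, ∀ j ≤ N, u2 i j = 0) ∧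
    (∀ i ∈ Icc 1 N, ∀ j ∈ Icc 1 N, p i j = 0) := by
  obtain ⟨m, rfl⟩ : ∃ m, N = m + 2 := ⟨N - 2, by omega⟩
  obtain ⟨hm1, hm2, hm3⟩ := hsys
  obtain ⟨h10, h1N, h1g0, h1gN⟩ := hu1
  obtain ⟨h20, h2N, h2g0, h2gN⟩ := hu2
  have hhne : gh (m+2) ≠ 0 := by
    simp only [gh]
    positivity
  -- pointwise momentum identities multiplied by h² u
  have key1 : ∀ i ∈ Icc 1 (m+1), ∀ j ∈ Icc 1 (m+2),
      u1 i j * (2*u1 i j - u1 (i+1) j - u1 (i-1) j)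
      + u1 i j * (2*u1 i j - u1 i (j+1) - u1 i (j-1))
      + gh (m+2) * (u1 i j * (p (i+1) j - p i j)) = 0 := by
    intro i hi j hj
    have e := hm1 i (by simpa using hi) j hj
    simp only [lap, d1pM] at e
    field_simp at e
    have e3 : (2*u1 i j - u1 (i+1) j - u1 (i-1) j) + (2*u1 i j - u1 i (j+1) - u1 i (j-1))
        + (p (i+1) j - p i j) * gh (m+2) = 0 := by
      apply mul_right_cancel₀ hhne
      linear_combination gh (m+2) * e
    linear_combination u1 i j * e3
  have key2 : ∀ i ∈ Icc 1 (m+2), ∀ j ∈ Icc 1 (m+1),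
      u2 i j * (2*u2 i j - u2 (i+1) j - u2 (i-1) j)
      + u2 i j * (2*u2 i j - u2 i (j+1) - u2 i (j-1))
      + gh (m+2) * (u2 i j * (p i (j+1) - p i j)) = 0 := by
    intro i hi j hj
    have e := hm2 i hi j (by simpa using hj)
    simp only [lap, d2pM] at e
    field_simp at e
    have e3 : (2*u2 i j - u2 (i+1) j - u2 (i-1) j) + (2*u2 i j - u2 i (j+1) - u2 i (j-1))
        + (p i (j+1) - p i j) * gh (m+2) = 0 := by
      apply mul_right_cancel₀ hhne
      linear_combination gh (m+2) * e
    linear_combination u2 i j * e3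
  have hdiv : ∀ i ∈ Icc 1 (m+2), ∀ j ∈ Icc 1 (m+2),
      (u1 i j - u1 (i-1) j) + (u2 i j - u2 i (j-1)) = 0 := by
    intro i hi j hj
    have e := hm3 i hi j hj
    simp only [d1V1, d2V2] at e
    field_simp at e
    linear_combination e
  -- summed energy identities
  have hE1 : (∑ i ∈ Icc 1 (m+1), ∑ j ∈ Icc 1 (m+2),
        u1 i j * (2*u1 i j - u1 (i+1) j - u1 (i-1) j))
      + (∑ i ∈ Icc 1 (m+1), ∑ j ∈ Icc 1 (m+2),
        u1 i j * (2*u1 i j - u1 i (j+1) - u1 i (j-1)))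
      + (∑ i ∈ Icc 1 (m+1), ∑ j ∈ Icc 1 (m+2),
        gh (m+2) * (u1 i j * (p (i+1) j - p i j))) = 0 := by
    have h0 : ∑ i ∈ Icc 1 (m+1), ∑ j ∈ Icc 1 (m+2),
        (u1 i j * (2*u1 i j - u1 (i+1) j - u1 (i-1) j)
        + u1 i j * (2*u1 i j - u1 i (j+1) - u1 i (j-1))
        + gh (m+2) * (u1 i j * (p (i+1) j - p i j))) = 0 :=
      Finset.sum_eq_zero fun i hi => Finset.sum_eq_zero fun j hj => key1 i hi j hj
    simpa only [Finset.sum_add_distrib] using h0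
  have hE2 : (∑ i ∈ Icc 1 (m+2), ∑ j ∈ Icc 1 (m+1),
        u2 i j * (2*u2 i j - u2 (i+1) j - u2 (i-1) j))
      + (∑ i ∈ Icc 1 (m+2), ∑ j ∈ Icc 1 (m+1),
        u2 i j * (2*u2 i j - u2 i (j+1) - u2 i (j-1)))
      + (∑ i ∈ Icc 1 (m+2), ∑ j ∈ Icc 1 (m+1),
        gh (m+2) * (u2 i j * (p i (j+1) - p i j))) = 0 := by
    have h0 : ∑ i ∈ Icc 1 (m+2), ∑ j ∈ Icc 1 (m+1),
        (u2 i j * (2*u2 i j - u2 (i+1) j - u2 (i-1) j)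
        + u2 i j * (2*u2 i j - u2 i (j+1) - u2 i (j-1))
        + gh (m+2) * (u2 i j * (p i (j+1) - p i j))) = 0 :=
      Finset.sum_eq_zero fun i hi => Finset.sum_eq_zero fun j hj => key2 i hi j hj
    simpa only [Finset.sum_add_distrib] using h0
  -- pressure terms cancel
  have hC : (∑ i ∈ Icc 1 (m+1), ∑ j ∈ Icc 1 (m+2),
        gh (m+2) * (u1 i j * (p (i+1) j - p i j)))
      + (∑ i ∈ Icc 1 (m+2), ∑ j ∈ Icc 1 (m+1),
        gh (m+2) * (u2 i j * (p i (j+1) - p i j))) = 0 := by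
    have c1 : ∀ j ∈ Icc 1 (m+2),
        ∑ i ∈ Icc 1 (m+1), gh (m+2) * (u1 i j * (p (i+1) j - p i j))
          = ∑ i ∈ Icc 1 (m+2), -(gh (m+2) * (p i j * (u1 i j - u1 (i-1) j))) := by
      intro j hj
      have h := sbp_p (fun i => u1 i j) (fun i => p i j) (m+1)
      rw [← Finset.mul_sum, h, h1N j, h10 j]
      simp [Finset.mul_sum]
    have c2 : ∀ i ∈ Icc 1 (m+2),
        ∑ j ∈ Icc 1 (m+1), gh (m+2) * (u2 i j * (p i (j+1) - p i j))
          = ∑ j ∈ Icc 1 (m+2), -(gh (m+2) * (p i j * (u2 i j - u2 i (j-1)))) := by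
      intro i hi
      have h := sbp_p (fun j => u2 i j) (fun j => p i j) (m+1)
      rw [← Finset.mul_sum, h, h2N i, h20 i]
      simp [Finset.mul_sum]
    rw [Finset.sum_comm (s := Icc 1 (m+1)) (t := Icc 1 (m+2))
      (f := fun i j => gh (m+2) * (u1 i j * (p (i+1) j - p i j)))]
    rw [Finset.sum_congr rfl c1, Finset.sum_congr rfl c2]
    rw [Finset.sum_comm (s := Icc 1 (m+2)) (t := Icc 1 (m+2))
      (f := fun j i => -(gh (m+2) * (p i j * (u1 i j - u1 (i-1) j))))]
    rw [← Finset.sum_add_distrib]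
    apply Finset.sum_eq_zero
    intro i hi
    rw [← Finset.sum_add_distrib]
    apply Finset.sum_eq_zero
    intro j hj
    have := hdiv i hi j hj
    linear_combination (-(gh (m+2) * p i j)) * this
  -- rewrite Dirichlet-direction terms as sums of squares
  have hA1eq : ∑ i ∈ Icc 1 (m+1), ∑ j ∈ Icc 1 (m+2),
        u1 i j * (2*u1 i j - u1 (i+1) j - u1 (i-1) j)
      = ∑ j ∈ Icc 1 (m+2), ∑ i ∈ Icc 1 (m+2), (u1 i j - u1 (i-1) j)^2 := by
    rw [Finset.sum_comm]
    refine Finset.sum_congr rfl fun j hj => ?_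
    have := dirich_eq (fun i => u1 i j) (m+1) (h10 j) (h1N j)
    simpa using this
  have hB2eq : ∑ i ∈ Icc 1 (m+2), ∑ j ∈ Icc 1 (m+1),
        u2 i j * (2*u2 i j - u2 i (j+1) - u2 i (j-1))
      = ∑ i ∈ Icc 1 (m+2), ∑ j ∈ Icc 1 (m+2), (u2 i j - u2 i (j-1))^2 := by
    refine Finset.sum_congr rfl fun i hi => ?_
    have := dirich_eq (fun j => u2 i j) (m+1) (h20 i) (h2N i)
    simpa using this
  -- ghost-direction terms are nonnegative
  have hB1nn : 0 ≤ ∑ i ∈ Icc 1 (m+1), ∑ j ∈ Icc 1 (m+2),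
      u1 i j * (2*u1 i j - u1 i (j+1) - u1 i (j-1)) := by
    refine Finset.sum_nonneg fun i hi => ?_
    have := ghost_nonneg (fun j => u1 i j) (m+1) (h1g0 i) (h1gN i)
    simpa using this
  have hA2nn : 0 ≤ ∑ i ∈ Icc 1 (m+2), ∑ j ∈ Icc 1 (m+1),
      u2 i j * (2*u2 i j - u2 (i+1) j - u2 (i-1) j) := by
    rw [Finset.sum_comm]
    refine Finset.sum_nonneg fun j hj => ?_
    have := ghost_nonneg (fun i => u2 i j) (m+1) (h2g0 j) (h2gN j)
    simpa using this
  have hS1nn : 0 ≤ ∑ j ∈ Icc 1 (m+2), ∑ i ∈ Icc 1 (m+2), (u1 i j - u1 (i-1) j)^2 :=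
    Finset.sum_nonneg fun _ _ => Finset.sum_nonneg fun _ _ => sq_nonneg _
  have hS2nn : 0 ≤ ∑ i ∈ Icc 1 (m+2), ∑ j ∈ Icc 1 (m+2), (u2 i j - u2 i (j-1))^2 :=
    Finset.sum_nonneg fun _ _ => Finset.sum_nonneg fun _ _ => sq_nonneg _
  rw [hA1eq] at hE1
  rw [hB2eq] at hE2
  have hS1 : ∑ j ∈ Icc 1 (m+2), ∑ i ∈ Icc 1 (m+2), (u1 i j - u1 (i-1) j)^2 = 0 := by
    linarith
  have hS2 : ∑ i ∈ Icc 1 (m+2), ∑ j ∈ Icc 1 (m+2), (u2 i j - u2 i (j-1))^2 = 0 := by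
    linarith
  have du1 := sq_zero hS1
  have du2 := sq_zero hS2
  -- telescoping: u1 vanishes
  have hu1z : ∀ j ∈ Icc 1 (m+2), ∀ i, i ≤ m+2 → u1 i j = 0 := by
    intro j hj i
    induction i with
    | zero => intro _; exact h10 j
    | succ i ih =>
        intro hi
        have hd := du1 j hj (i+1) (by simp only [Finset.mem_Icc]; omega)
        have heq : u1 (i+1) j = u1 i j := by
          have : u1 (i+1) j - u1 i j = 0 := by simpa using hd
          linarith
        rw [heq]
        exact ih (by omega)
  have hu2z : ∀ i ∈ Icc 1 (m+2), ∀ j, j ≤ m+2 → u2 i j = 0 := by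
    intro i hi j
    induction j with
    | zero => intro _; exact h20 i
    | succ j ih =>
        intro hj
        have hd := du2 i hi (j+1) (by simp only [Finset.mem_Icc]; omega)
        have heq : u2 i (j+1) = u2 i j := by
          have : u2 i (j+1) - u2 i j = 0 := by simpa using hd
          linarith
        rw [heq]
        exact ih (by omega)
  have u1all : ∀ i ≤ m+2, ∀ j ≤ m+2+1, u1 i j = 0 := by
    intro i hi j hj
    rcases (by omega : j = 0 ∨ (1 ≤ j ∧ j ≤ m+2) ∨ j = m+2+1) with h | h | h
    · subst h
      rw [h1g0 i, hu1z 1 (by simp only [Finset.mem_Icc]; omega) i hi, neg_zero]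
    · exact hu1z j (by simp only [Finset.mem_Icc]; omega) i hi
    · subst h
      rw [h1gN i, hu1z (m+2) (by simp only [Finset.mem_Icc]; omega) i hi, neg_zero]
  have u2all : ∀ i ≤ m+2+1, ∀ j ≤ m+2, u2 i j = 0 := by
    intro i hi j hj
    rcases (by omega : i = 0 ∨ (1 ≤ i ∧ i ≤ m+2) ∨ i = m+2+1) with h | h | h
    · subst h
      rw [h2g0 j, hu2z 1 (by simp only [Finset.mem_Icc]; omega) j hj, neg_zero]
    · exact hu2z i (by simp only [Finset.mem_Icc]; omega) j hj
    · subst h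
      rw [h2gN j, hu2z (m+2) (by simp only [Finset.mem_Icc]; omega) j hj, neg_zero]
  refine ⟨u1all, u2all, ?_⟩
  -- pressure: discrete gradient vanishes
  have hp1 : ∀ i ∈ Icc 1 (m+1), ∀ j ∈ Icc 1 (m+2), p (i+1) j = p i j := by
    intro i hi j hj
    simp only [Finset.mem_Icc] at hi hj
    have e := hm1 i (by simp only [Finset.mem_Icc]; omega) j (by simp only [Finset.mem_Icc]; omega)
    have z : lap (m+2) u1 i j = 0 := by
      simp only [lap]
      rw [u1all (i+1) (by omega) j (by omega), u1all i (by omega) j (by omega),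
        u1all (i-1) (by omega) j (by omega), u1all i (by omega) (j+1) (by omega),
        u1all i (by omega) (j-1) (by omega)]
      ring
    rw [z] at e
    simp only [d1pM, neg_zero, zero_add] at e
    have := (div_eq_zero_iff.mp e).resolve_right hhne
    linarith
  have hp2 : ∀ i ∈ Icc 1 (m+2), ∀ j ∈ Icc 1 (m+1), p i (j+1) = p i j := by
    intro i hi j hj
    simp only [Finset.mem_Icc] at hi hj
    have e := hm2 i (by simp only [Finset.mem_Icc]; omega) j (by simp only [Finset.mem_Icc]; omega)
    have z : lap (m+2) u2 i j = 0 := by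
      simp only [lap]
      rw [u2all (i+1) (by omega) j (by omega), u2all i (by omega) j (by omega),
        u2all (i-1) (by omega) j (by omega), u2all i (by omega) (j+1) (by omega),
        u2all i (by omega) (j-1) (by omega)]
      ring
    rw [z] at e
    simp only [d2pM, neg_zero, zero_add] at e
    have := (div_eq_zero_iff.mp e).resolve_right hhne
    linarith
  -- p is constant
  have hpci : ∀ j ∈ Icc 1 (m+2), ∀ i, i ≤ m+1 → p (i+1) j = p 1 j := by
    intro j hj i
    induction i with
    | zero => intro _; rfl
    | succ i ih =>
        intro hi
        rw [hp1 (i+1) (by simp only [Finset.mem_Icc]; omega) j hj]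
        exact ih (by omega)
  have hpcj : ∀ j, j ≤ m+1 → p 1 (j+1) = p 1 1 := by
    intro j
    induction j with
    | zero => intro _; rfl
    | succ j ih =>
        intro hj
        rw [hp2 1 (by simp only [Finset.mem_Icc]; omega) (j+1) (by simp only [Finset.mem_Icc]; omega)]
        exact ih (by omega)
  have hpc : ∀ i ∈ Icc 1 (m+2), ∀ j ∈ Icc 1 (m+2), p i j = p 1 1 := by
    intro i hi j hj
    simp only [Finset.mem_Icc] at hi hj
    obtain ⟨k, rfl⟩ : ∃ k, i = k + 1 := ⟨i - 1, by omega⟩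
    obtain ⟨l, rfl⟩ : ∃ l, j = l + 1 := ⟨j - 1, by omega⟩
    rw [hpci (l+1) (by simp only [Finset.mem_Icc]; omega) k (by omega)]
    exact hpcj l (by omega)
  -- mean zero forces the constant to vanish
  have hsum : ∑ i ∈ Icc 1 (m+2), ∑ j ∈ Icc 1 (m+2), p i j = ((m:ℝ)+2)^2 * p 1 1 := by
    rw [Finset.sum_congr rfl (fun i hi => Finset.sum_congr rfl (fun j hj => hpc i hi j hj))]
    simp only [Finset.sum_const, Nat.card_Icc, smul_eq_mul]
    push_cast
    ring
  have hpmz : ((m:ℝ)+2)^2 * p 1 1 = 0 := by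
    rw [← hsum]
    exact hp
  have hp11 : p 1 1 = 0 := by
    have h2 : ((m:ℝ)+2)^2 ≠ 0 := by positivity
    exact (mul_eq_zero.mp hpmz).resolve_left h2
  intro i hi j hj
  rw [hpc i hi j hj, hp11]
end
end

section
/- Discrete energy identity: for every integer N ≥ 2, if (e¹, e², e_p) ∈ V_h^(1) × V_h^(2) × M_h satisfies the discrete Stokes system with residuals (R¹, R², R), then |e|₁² = (e_p, R)_{M} + (R¹, e¹)_{V¹} + (R², e²)_{V²}, where e = (e¹, e²). -/
open Finset

noncomputable section

lemma sum_Icc_one_aux (n : ℕ) (f : ℕ → ℝ) : ∑ i ∈ Icc 1 n, f i = ∑ k ∈ range n, f (k+1) := by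
  rw [← Finset.Ico_add_one_right_eq_Icc, Finset.sum_Ico_eq_sum_range]
  simp [Nat.add_comm]

lemma sum_Icc_zero_aux (n : ℕ) (f : ℕ → ℝ) : ∑ i ∈ Icc 0 n, f i = ∑ k ∈ range (n+1), f k := by
  congr 1; ext x; simp [Nat.lt_succ_iff]

lemma tele_P (N : ℕ) (hN : 1 ≤ N) (a b : ℕ → ℝ) (hb0 : b 0 = 0) (hbN : b N = 0) :
    (∑ i ∈ Icc 1 (N-1), (a (i+1) - a i) * b i) + ∑ i ∈ Icc 1 N, a i * (b i - b (i-1)) = 0 := by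
  obtain ⟨m, rfl⟩ : ∃ m, N = m + 1 := ⟨N - 1, by omega⟩
  rw [sum_Icc_one_aux, sum_Icc_one_aux]
  simp only [Nat.add_sub_cancel]
  rw [Finset.sum_range_succ]
  have key : (∑ k ∈ range m, (a (k+1+1) - a (k+1)) * b (k+1))
      + ∑ k ∈ range m, a (k+1) * (b (k+1) - b (k+1-1))
      = a (m+1) * b m - a 1 * b 0 := by
    rw [← Finset.sum_add_distrib,
      show a (m+1) * b m - a 1 * b 0
        = (fun k => a (k+1) * b k) m - (fun k => a (k+1) * b k) 0 from rfl,
      ← Finset.sum_range_sub (fun k => a (k+1) * b k) m]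
    exact Finset.sum_congr rfl fun k _ => by simp only [Nat.add_sub_cancel]; ring
  simp only [Nat.add_sub_cancel] at key ⊢
  rw [hb0] at key
  rw [hbN]
  linarith [key]

lemma tele_D (N : ℕ) (hN : 1 ≤ N) (b : ℕ → ℝ) (hb0 : b 0 = 0) (hbN : b N = 0) :
    ∑ i ∈ Icc 1 (N-1), (2*b i - b (i+1) - b (i-1)) * b i
      = ∑ i ∈ Icc 1 N, (b i - b (i-1))^2 := by
  obtain ⟨m, rfl⟩ : ∃ m, N = m + 1 := ⟨N - 1, by omega⟩
  rw [sum_Icc_one_aux, sum_Icc_one_aux]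
  simp only [Nat.add_sub_cancel]
  rw [Finset.sum_range_succ]
  have key : (∑ k ∈ range m, ((2*b (k+1) - b (k+1+1) - b (k+1-1)) * b (k+1) - (b (k+1) - b (k+1-1))^2))
      = (fun k => b k^2 - b (k+1) * b k) m - (fun k => b k^2 - b (k+1) * b k) 0 := by
    rw [← Finset.sum_range_sub (fun k => b k^2 - b (k+1) * b k) m]
    exact Finset.sum_congr rfl fun k _ => by simp only [Nat.add_sub_cancel]; ring
  rw [Finset.sum_sub_distrib] at key
  simp only [Nat.add_sub_cancel] at key ⊢
  rw [hb0] at key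
  rw [hbN] at key ⊢
  linarith [key]

lemma tele_R (N : ℕ) (hN : 1 ≤ N) (b : ℕ → ℝ) (hb0 : b 0 = -b 1) (hbN : b (N+1) = -b N) :
    ∑ j ∈ Icc 1 N, (2*b j - b (j+1) - b (j-1)) * b j
      = ∑ j ∈ Icc 0 N, rho N j * (b (j+1) - b j)^2 := by
  obtain ⟨m, rfl⟩ : ∃ m, N = m + 1 := ⟨N - 1, by omega⟩
  rw [sum_Icc_one_aux, sum_Icc_zero_aux, Finset.sum_range_succ, Finset.sum_range_succ',
    Finset.sum_range_succ]
  have hrho : ∀ k ∈ range m, rho (m+1) (k+1) * (b (k+1+1) - b (k+1))^2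
      = (b (k+1+1) - b (k+1))^2 := by
    intro k hk
    simp only [mem_range] at hk
    rw [show rho (m+1) (k+1) = 1 from if_neg (by omega), one_mul]
  rw [Finset.sum_congr rfl hrho]
  have key : (∑ k ∈ range m, ((2*b (k+1) - b (k+1+1) - b (k+1-1)) * b (k+1) - (b (k+1+1) - b (k+1))^2))
      = (fun k => b (k+1)^2 - b k * b (k+1)) 0 - (fun k => b (k+1)^2 - b k * b (k+1)) m := by
    rw [← Finset.sum_range_sub' (fun k => b (k+1)^2 - b k * b (k+1)) m]
    exact Finset.sum_congr rfl fun k _ => by simp only [Nat.add_sub_cancel]; ring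
  rw [Finset.sum_sub_distrib] at key
  simp only [Nat.add_sub_cancel] at key ⊢
  have h0 : rho (m+1) 0 = 1/2 := if_pos (Or.inl rfl)
  have hm : rho (m+1) (m+1) = 1/2 := if_pos (Or.inr rfl)
  rw [h0, hm, hbN, hb0]
  rw [hb0] at key
  simp only [Nat.zero_add] at key ⊢
  linear_combination key

lemma line_P (N : ℕ) (hN : 1 ≤ N) (h : ℝ) (a b : ℕ → ℝ) (hb0 : b 0 = 0) (hbN : b N = 0) :
    (∑ i ∈ Icc 1 (N-1), (a (i+1) - a i) / h * b i)
      + ∑ i ∈ Icc 1 N, a i * ((b i - b (i-1)) / h) = 0 := by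
  have t := tele_P N hN a b hb0 hbN
  have e1 : (∑ i ∈ Icc 1 (N-1), (a (i+1) - a i) / h * b i)
      = (∑ i ∈ Icc 1 (N-1), (a (i+1) - a i) * b i) / h := by
    rw [Finset.sum_div]; exact Finset.sum_congr rfl fun i _ => by ring
  have e2 : (∑ i ∈ Icc 1 N, a i * ((b i - b (i-1)) / h))
      = (∑ i ∈ Icc 1 N, a i * (b i - b (i-1))) / h := by
    rw [Finset.sum_div]; exact Finset.sum_congr rfl fun i _ => by ring
  rw [e1, e2, ← add_div, t, zero_div]

lemma line_D (N : ℕ) (hN : 1 ≤ N) (h : ℝ) (b : ℕ → ℝ) (hb0 : b 0 = 0) (hbN : b N = 0) :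
    ∑ i ∈ Icc 1 (N-1), (-((b (i+1) - 2*b i + b (i-1)) / h ^ 2)) * b i
      = ∑ i ∈ Icc 1 N, ((b i - b (i-1)) / h) * ((b i - b (i-1)) / h) := by
  have t := tele_D N hN b hb0 hbN
  calc ∑ i ∈ Icc 1 (N-1), (-((b (i+1) - 2*b i + b (i-1)) / h ^ 2)) * b i
      = (∑ i ∈ Icc 1 (N-1), (2*b i - b (i+1) - b (i-1)) * b i) / h ^ 2 := by
        rw [Finset.sum_div]; exact Finset.sum_congr rfl fun i _ => by ring
    _ = (∑ i ∈ Icc 1 N, (b i - b (i-1))^2) / h ^ 2 := by rw [t]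
    _ = ∑ i ∈ Icc 1 N, ((b i - b (i-1)) / h) * ((b i - b (i-1)) / h) := by
        rw [Finset.sum_div]; exact Finset.sum_congr rfl fun i _ => by ring

lemma line_R (N : ℕ) (hN : 1 ≤ N) (h : ℝ) (b : ℕ → ℝ) (hb0 : b 0 = -b 1) (hbN : b (N+1) = -b N) :
    ∑ j ∈ Icc 1 N, (-((b (j+1) - 2*b j + b (j-1)) / h ^ 2)) * b j
      = ∑ j ∈ Icc 0 N, rho N j * (((b (j+1) - b j) / h) * ((b (j+1) - b j) / h)) := by
  have t := tele_R N hN b hb0 hbN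
  calc ∑ j ∈ Icc 1 N, (-((b (j+1) - 2*b j + b (j-1)) / h ^ 2)) * b j
      = (∑ j ∈ Icc 1 N, (2*b j - b (j+1) - b (j-1)) * b j) / h ^ 2 := by
        rw [Finset.sum_div]; exact Finset.sum_congr rfl fun i _ => by ring
    _ = (∑ j ∈ Icc 0 N, rho N j * (b (j+1) - b j)^2) / h ^ 2 := by rw [t]
    _ = ∑ j ∈ Icc 0 N, rho N j * (((b (j+1) - b j) / h) * ((b (j+1) - b j) / h)) := by
        rw [Finset.sum_div]; exact Finset.sum_congr rfl fun i _ => by ring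

/-- discrete energy identity:
`|e|₁² = (e_p, R)_M + (R¹, e¹)_{V¹} + (R², e²)_{V²}`. -/
theorem discrete_energy_identity (N : ℕ) (hN : 2 ≤ N)
    (e1 e2 ep R1 R2 R : ℕ → ℕ → ℝ)
    (he1 : inV1 N e1) (he2 : inV2 N e2) (hep : inM N ep)
    (hsys : StokesSys N e1 e2 ep R1 R2 R) :
    H1semisq N e1 e2 = innerM N ep R + innerV1 N R1 e1 + innerV2 N R2 e2 := by
  obtain ⟨h10, h1N, h1lo, h1hi⟩ := he1
  obtain ⟨h20, h2N, h2lo, h2hi⟩ := he2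
  obtain ⟨hs1, hs2, hs3⟩ := hsys
  have hN1 : 1 ≤ N := by omega
  have eM : innerM N ep R
      = gh N ^ 2 * ((∑ i ∈ Icc 1 N, ∑ j ∈ Icc 1 N, ep i j * d1V1 N e1 i j)
        + ∑ i ∈ Icc 1 N, ∑ j ∈ Icc 1 N, ep i j * d2V2 N e2 i j) := by
    unfold innerM
    congr 1
    rw [← Finset.sum_add_distrib]
    refine Finset.sum_congr rfl fun i hi => ?_
    rw [← Finset.sum_add_distrib]
    refine Finset.sum_congr rfl fun j hj => ?_
    rw [← hs3 i hi j hj]; ring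
  have eV1 : innerV1 N R1 e1
      = gh N ^ 2 * ((∑ i ∈ Icc 1 (N-1), ∑ j ∈ Icc 1 N, (-lap N e1 i j) * e1 i j)
        + ∑ i ∈ Icc 1 (N-1), ∑ j ∈ Icc 1 N, d1pM N ep i j * e1 i j) := by
    unfold innerV1
    congr 1
    rw [← Finset.sum_add_distrib]
    refine Finset.sum_congr rfl fun i hi => ?_
    rw [← Finset.sum_add_distrib]
    refine Finset.sum_congr rfl fun j hj => ?_
    rw [← hs1 i hi j hj]; ring
  have eV2 : innerV2 N R2 e2
      = gh N ^ 2 * ((∑ i ∈ Icc 1 N, ∑ j ∈ Icc 1 (N-1), (-lap N e2 i j) * e2 i j)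
        + ∑ i ∈ Icc 1 N, ∑ j ∈ Icc 1 (N-1), d2pM N ep i j * e2 i j) := by
    unfold innerV2
    congr 1
    rw [← Finset.sum_add_distrib]
    refine Finset.sum_congr rfl fun i hi => ?_
    rw [← Finset.sum_add_distrib]
    refine Finset.sum_congr rfl fun j hj => ?_
    rw [← hs2 i hi j hj]; ring
  have factPx : (∑ i ∈ Icc 1 (N-1), ∑ j ∈ Icc 1 N, d1pM N ep i j * e1 i j)
      + (∑ i ∈ Icc 1 N, ∑ j ∈ Icc 1 N, ep i j * d1V1 N e1 i j) = 0 := by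
    have c1 : (∑ i ∈ Icc 1 (N-1), ∑ j ∈ Icc 1 N, d1pM N ep i j * e1 i j)
        = ∑ j ∈ Icc 1 N, ∑ i ∈ Icc 1 (N-1), d1pM N ep i j * e1 i j := Finset.sum_comm
    have c2 : (∑ i ∈ Icc 1 N, ∑ j ∈ Icc 1 N, ep i j * d1V1 N e1 i j)
        = ∑ j ∈ Icc 1 N, ∑ i ∈ Icc 1 N, ep i j * d1V1 N e1 i j := Finset.sum_comm
    rw [c1, c2, ← Finset.sum_add_distrib]
    refine Finset.sum_eq_zero fun j hj => ?_
    simpa [d1pM, d1V1] using line_P N hN1 (gh N) (fun i => ep i j) (fun i => e1 i j) (h10 j) (h1N j)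
  have factPy : (∑ i ∈ Icc 1 N, ∑ j ∈ Icc 1 (N-1), d2pM N ep i j * e2 i j)
      + (∑ i ∈ Icc 1 N, ∑ j ∈ Icc 1 N, ep i j * d2V2 N e2 i j) = 0 := by
    rw [← Finset.sum_add_distrib]
    refine Finset.sum_eq_zero fun i hi => ?_
    simpa [d2pM, d2V2] using line_P N hN1 (gh N) (fun j => ep i j) (fun j => e2 i j) (h20 i) (h2N i)
  have factA : ∑ i ∈ Icc 1 (N-1), ∑ j ∈ Icc 1 N, (-lap N e1 i j) * e1 i j
      = (∑ i ∈ Icc 1 N, ∑ j ∈ Icc 1 N, d1V1 N e1 i j * d1V1 N e1 i j)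
        + ∑ i ∈ Icc 1 (N-1), ∑ j ∈ Icc 0 N, rho N j * (d2V1 N e1 i j * d2V1 N e1 i j) := by
    have split : ∑ i ∈ Icc 1 (N-1), ∑ j ∈ Icc 1 N, (-lap N e1 i j) * e1 i j
        = (∑ i ∈ Icc 1 (N-1), ∑ j ∈ Icc 1 N, (-((e1 (i+1) j - 2*e1 i j + e1 (i-1) j) / gh N ^ 2)) * e1 i j)
          + ∑ i ∈ Icc 1 (N-1), ∑ j ∈ Icc 1 N, (-((e1 i (j+1) - 2*e1 i j + e1 i (j-1)) / gh N ^ 2)) * e1 i j := by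
      rw [← Finset.sum_add_distrib]
      refine Finset.sum_congr rfl fun i _ => ?_
      rw [← Finset.sum_add_distrib]
      refine Finset.sum_congr rfl fun j _ => ?_
      simp only [lap]; ring
    rw [split]
    congr 1
    · have c1 : (∑ i ∈ Icc 1 (N-1), ∑ j ∈ Icc 1 N, (-((e1 (i+1) j - 2*e1 i j + e1 (i-1) j) / gh N ^ 2)) * e1 i j)
          = ∑ j ∈ Icc 1 N, ∑ i ∈ Icc 1 (N-1), (-((e1 (i+1) j - 2*e1 i j + e1 (i-1) j) / gh N ^ 2)) * e1 i j := Finset.sum_comm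
      have c2 : (∑ i ∈ Icc 1 N, ∑ j ∈ Icc 1 N, d1V1 N e1 i j * d1V1 N e1 i j)
          = ∑ j ∈ Icc 1 N, ∑ i ∈ Icc 1 N, d1V1 N e1 i j * d1V1 N e1 i j := Finset.sum_comm
      rw [c1, c2]
      refine Finset.sum_congr rfl fun j hj => ?_
      simpa [d1V1] using line_D N hN1 (gh N) (fun i => e1 i j) (h10 j) (h1N j)
    · refine Finset.sum_congr rfl fun i hi => ?_
      simpa [d2V1] using line_R N hN1 (gh N) (fun j => e1 i j) (h1lo i) (h1hi i)
  have factC : ∑ i ∈ Icc 1 N, ∑ j ∈ Icc 1 (N-1), (-lap N e2 i j) * e2 i j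
      = (∑ i ∈ Icc 0 N, ∑ j ∈ Icc 1 (N-1), rho N i * (d1V2 N e2 i j * d1V2 N e2 i j))
        + ∑ i ∈ Icc 1 N, ∑ j ∈ Icc 1 N, d2V2 N e2 i j * d2V2 N e2 i j := by
    have split : ∑ i ∈ Icc 1 N, ∑ j ∈ Icc 1 (N-1), (-lap N e2 i j) * e2 i j
        = (∑ i ∈ Icc 1 N, ∑ j ∈ Icc 1 (N-1), (-((e2 (i+1) j - 2*e2 i j + e2 (i-1) j) / gh N ^ 2)) * e2 i j)
          + ∑ i ∈ Icc 1 N, ∑ j ∈ Icc 1 (N-1), (-((e2 i (j+1) - 2*e2 i j + e2 i (j-1)) / gh N ^ 2)) * e2 i j := by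
      rw [← Finset.sum_add_distrib]
      refine Finset.sum_congr rfl fun i _ => ?_
      rw [← Finset.sum_add_distrib]
      refine Finset.sum_congr rfl fun j _ => ?_
      simp only [lap]; ring
    rw [split]
    congr 1
    · have c1 : (∑ i ∈ Icc 1 N, ∑ j ∈ Icc 1 (N-1), (-((e2 (i+1) j - 2*e2 i j + e2 (i-1) j) / gh N ^ 2)) * e2 i j)
          = ∑ j ∈ Icc 1 (N-1), ∑ i ∈ Icc 1 N, (-((e2 (i+1) j - 2*e2 i j + e2 (i-1) j) / gh N ^ 2)) * e2 i j := Finset.sum_comm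
      have c2 : (∑ i ∈ Icc 0 N, ∑ j ∈ Icc 1 (N-1), rho N i * (d1V2 N e2 i j * d1V2 N e2 i j))
          = ∑ j ∈ Icc 1 (N-1), ∑ i ∈ Icc 0 N, rho N i * (d1V2 N e2 i j * d1V2 N e2 i j) := Finset.sum_comm
      rw [c1, c2]
      refine Finset.sum_congr rfl fun j hj => ?_
      simpa [d1V2] using line_R N hN1 (gh N) (fun i => e2 i j) (h2lo j) (h2hi j)
    · refine Finset.sum_congr rfl fun i hi => ?_
      simpa [d2V2] using line_D N hN1 (gh N) (fun j => e2 i j) (h20 i) (h2N i)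
  rw [eM, eV1, eV2]
  simp only [H1semisq, innerM, innerW1, innerW2]
  linear_combination (-(gh N ^ 2)) * factA + (-(gh N ^ 2)) * factC
    + (-(gh N ^ 2)) * factPx + (-(gh N ^ 2)) * factPy
end
end

section
/- Unique solvability of the first-order jump system: let t = (t₁, t₂) ∈ ℝ² with t₁² + t₂² = 1 and let n = (n₁, n₂) be a unit vector orthogonal to t (so n = (t₂, −t₁) or n = (−t₂, t₁)). Then the 5×5 real matrix with rows (t₁, t₂, 0, 0, 0), (0, 0, t₁, t₂, 0), (1, 0, 0, 1, 0), (2n₁, n₂, n₂, 0, −n₁), (0, n₁, n₁, 2n₂, −n₂) has nonzero determinant; equivalently, it is invertible. -/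
/-- unique solvability of the first-order jump system: for a unit tangent
`t = (t₁, t₂)` and a unit normal `n = (n₁, n₂)` orthogonal to `t`, the 5×5 coefficient
matrix of the linear system for `([[u¹_x]], [[u¹_y]], [[u²_x]], [[u²_y]], [[p]])` has
nonzero determinant, i.e. it is invertible. -/
theorem first_order_jump_system_invertible (t₁ t₂ n₁ n₂ : ℝ)
    (ht : t₁ ^ 2 + t₂ ^ 2 = 1)
    (hn : (n₁ = t₂ ∧ n₂ = -t₁) ∨ (n₁ = -t₂ ∧ n₂ = t₁)) :
    (!![t₁, t₂, 0, 0, 0;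
        0, 0, t₁, t₂, 0;
        1, 0, 0, 1, 0;
        2 * n₁, n₂, n₂, 0, -n₁;
        0, n₁, n₁, 2 * n₂, -n₂] : Matrix (Fin 5) (Fin 5) ℝ).det ≠ 0 := by
  rw [show (!![t₁, t₂, 0, 0, 0;
        0, 0, t₁, t₂, 0;
        1, 0, 0, 1, 0;
        2 * n₁, n₂, n₂, 0, -n₁;
        0, n₁, n₁, 2 * n₂, -n₂] : Matrix (Fin 5) (Fin 5) ℝ).det =
      4*t₁*n₁*n₂*t₂ + t₁^2*n₁^2 - t₁^2*n₂^2 - n₁^2*t₂^2 + n₂^2*t₂^2 from ?_]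
  · rcases hn with ⟨h1, h2⟩ | ⟨h1, h2⟩ <;> subst h1 <;> subst h2 <;>
      simp only [ne_eq] <;> intro h <;> nlinarith [ht, h]
  · simp [Matrix.det_succ_row_zero, Fin.sum_univ_succ, Fin.succAbove]
    ring
end

section
/- First-order accuracy of the corrected second difference at an irregular node: let h > 0, x₀ ∈ ℝ, and s ∈ (x₀, x₀ + h). Let u⁺, u⁻ : ℝ → ℝ be three times continuously differentiable on [x₀ − h, x₀ + h], and define u(x) = u⁺(x) for x ≤ s and u(x) = u⁻(x) for x > s. Set ξ = x₀ + h − s, J = [[u]](s) + ξ [[u']](s) + (1/2) ξ² [[u'']](s), and let M₃ be the maximum over [x₀ − h, x₀ + h] of |(u⁺)'''| and |(u⁻)'''|. Then |(u(x₀ − h) − 2 u(x₀) + u(x₀ + h) + J)/h² − (u⁺)''(x₀)| ≤ M₃ h. -/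
open Set

/-- If `f` is `C^n` on `S` and `s ⊆ S`, both with unique differentiability, then
iterated derivatives within `s` and within `S` agree on `s` up to order `n`. -/
lemma iteratedDerivWithin_subset_aux {f : ℝ → ℝ} {S s : Set ℝ} (hst : s ⊆ S)
    (hs : UniqueDiffOn ℝ s) (hS : UniqueDiffOn ℝ S) {n m : ℕ} (hmn : (m : WithTop ℕ∞) ≤ n)
    (hf : ContDiffOn ℝ n f S) {x : ℝ} (hx : x ∈ s) :
    iteratedDerivWithin m f s x = iteratedDerivWithin m f S x := by
  have H := (hf.ftaylorSeriesWithin hS).mono hst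
  rw [iteratedDerivWithin_eq_iteratedFDerivWithin, iteratedDerivWithin_eq_iteratedFDerivWithin,
    ← H.eq_iteratedFDerivWithin_of_uniqueDiffOn hmn hs hx]
  rfl

/-- Second-order Taylor expansion to the right with Lagrange remainder bound. -/
lemma taylor2_right_aux {f : ℝ → ℝ} {a b c d M : ℝ} (hcd : c < d)
    (hc : c ∈ Icc a b) (hd : d ∈ Icc a b)
    (hf : ContDiffOn ℝ 3 f (Icc a b))
    (hM : ∀ y ∈ Icc a b, |iteratedDerivWithin 3 f (Icc a b) y| ≤ M) :
    |f d - (f c + (d - c) * iteratedDerivWithin 1 f (Icc a b) c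
        + (d - c) ^ 2 / 2 * iteratedDerivWithin 2 f (Icc a b) c)| ≤ M * (d - c) ^ 3 / 6 := by
  have hab : a < b := lt_of_le_of_lt hc.1 (lt_of_lt_of_le hcd hd.2)
  have hTS : Icc c d ⊆ Icc a b := Icc_subset_Icc hc.1 hd.2
  have hfT : ContDiffOn ℝ 3 f (Icc c d) := hf.mono hTS
  have hf' : DifferentiableOn ℝ (iteratedDerivWithin 2 f (Icc c d)) (Ioo c d) :=
    (hfT.differentiableOn_iteratedDerivWithin (by norm_num) (uniqueDiffOn_Icc hcd)).mono
      Ioo_subset_Icc_self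
  obtain ⟨x', hx', heq⟩ := taylor_mean_remainder_lagrange (n := 2) hcd.ne
    (by rw [uIcc_of_le hcd.le]; exact hfT.of_le (by norm_num))
    (by rw [uIcc_of_le hcd.le, uIoo_of_le hcd.le]; exact hf')
  rw [uIoo_of_le hcd.le] at hx'
  rw [uIcc_of_le hcd.le] at heq
  have hcT : c ∈ Icc c d := left_mem_Icc.2 hcd.le
  have hsub : ∀ m : ℕ, m ≤ 3 → ∀ y ∈ Icc c d,
      iteratedDerivWithin m f (Icc c d) y = iteratedDerivWithin m f (Icc a b) y := by
    intro m hm y hy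
    exact iteratedDerivWithin_subset_aux hTS (uniqueDiffOn_Icc hcd) (uniqueDiffOn_Icc hab)
      (by exact_mod_cast hm) hf hy
  have hP : taylorWithinEval f 2 (Icc c d) c d
      = f c + (d - c) * iteratedDerivWithin 1 f (Icc a b) c
        + (d - c) ^ 2 / 2 * iteratedDerivWithin 2 f (Icc a b) c := by
    rw [taylor_within_apply]
    simp only [Finset.sum_range_succ, Finset.sum_range_zero, smul_eq_mul,
      iteratedDerivWithin_zero, Nat.factorial]
    rw [hsub 1 (by norm_num) c hcT, hsub 2 (by norm_num) c hcT]
    push_cast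
    ring
  have hD : iteratedDerivWithin 3 f (Icc c d) x' = iteratedDerivWithin 3 f (Icc a b) x' :=
    hsub 3 le_rfl x' (Ioo_subset_Icc_self hx')
  have hbound : |iteratedDerivWithin 3 f (Icc a b) x'| ≤ M := hM x' (hTS (Ioo_subset_Icc_self hx'))
  rw [hP] at heq
  rw [heq, hD]
  rw [abs_div, abs_mul, abs_pow, abs_of_pos (sub_pos.2 hcd)]
  have h6 : |(((2 + 1 : ℕ).factorial : ℝ))| = 6 := by norm_num [Nat.factorial]
  rw [h6]
  have hdc : (0 : ℝ) ≤ d - c := by linarith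
  calc |iteratedDerivWithin 3 f (Icc a b) x'| * (d - c) ^ (2 + 1) / 6
      ≤ M * (d - c) ^ (2 + 1) / 6 := by gcongr
    _ = M * (d - c) ^ 3 / 6 := by norm_num

/-- Second-order Taylor expansion to the left with a cruder remainder bound. -/
lemma taylor2_left_aux {f : ℝ → ℝ} {a b c d M : ℝ} (hcd : c < d)
    (hc : c ∈ Icc a b) (hd : d ∈ Icc a b)
    (hf : ContDiffOn ℝ 3 f (Icc a b))
    (hM : ∀ y ∈ Icc a b, |iteratedDerivWithin 3 f (Icc a b) y| ≤ M) :
    |f c - (f d + (c - d) * iteratedDerivWithin 1 f (Icc a b) d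
        + (c - d) ^ 2 / 2 * iteratedDerivWithin 2 f (Icc a b) d)| ≤ M * (d - c) ^ 3 / 2 := by
  have hab : a < b := lt_of_le_of_lt hc.1 (lt_of_lt_of_le hcd hd.2)
  have hTS : Icc c d ⊆ Icc a b := Icc_subset_Icc hc.1 hd.2
  have hM0 : 0 ≤ M := le_trans (abs_nonneg _) (hM c hc)
  have hf2 : ContDiffOn ℝ 2 f (Icc a b) := hf.of_le (by norm_num)
  have hf' : DifferentiableOn ℝ (iteratedDerivWithin 2 f (Icc a b)) (Icc a b) :=
    hf.differentiableOn_iteratedDerivWithin (by norm_num) (uniqueDiffOn_Icc hab)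
  set g : ℝ → ℝ := fun t => taylorWithinEval f 2 (Icc a b) t c with hg
  have hderiv : ∀ t ∈ Icc c d, HasDerivWithinAt g
      ((((Nat.factorial 2 : ℕ) : ℝ)⁻¹ * (c - t) ^ 2) • iteratedDerivWithin 3 f (Icc a b) t) (Icc c d) t := by
    intro t ht
    exact (hasDerivWithinAt_taylorWithinEval_at_Icc c hab (hTS ht) hf2 hf').mono hTS
  have hbound : ∀ t ∈ Ico c d,
      ‖(((Nat.factorial 2 : ℕ) : ℝ)⁻¹ * (c - t) ^ 2) • iteratedDerivWithin 3 f (Icc a b) t‖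
        ≤ (1 / 2) * (d - c) ^ 2 * M := by
    intro t ht
    have ht' : t ∈ Icc c d := Ico_subset_Icc_self ht
    rw [norm_smul, Real.norm_eq_abs, Real.norm_eq_abs, abs_mul, abs_pow]
    have h1 : |(((Nat.factorial 2 : ℕ) : ℝ))⁻¹| = 1 / 2 := by norm_num [Nat.factorial]
    rw [h1]
    have h2 : |c - t| ≤ d - c := by
      rw [abs_sub_comm, abs_of_nonneg (sub_nonneg.2 ht'.1)]
      linarith [ht'.2]
    have h3 : |c - t| ^ 2 ≤ (d - c) ^ 2 := by
      apply pow_le_pow_left₀ (abs_nonneg _) h2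
    exact mul_le_mul (mul_le_mul_of_nonneg_left h3 (by norm_num))
      (hM t (hTS ht')) (abs_nonneg _) (by positivity)
  have key := norm_image_sub_le_of_norm_deriv_le_segment' hderiv hbound d (right_mem_Icc.2 hcd.le)
  have hgc : g c = f c := taylorWithinEval_self f 2 (Icc a b) c
  have hgd : g d = f d + (c - d) * iteratedDerivWithin 1 f (Icc a b) d
      + (c - d) ^ 2 / 2 * iteratedDerivWithin 2 f (Icc a b) d := by
    show taylorWithinEval f 2 (Icc a b) d c = _
    rw [taylor_within_apply]
    simp only [Finset.sum_range_succ, Finset.sum_range_zero, smul_eq_mul,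
      iteratedDerivWithin_zero, Nat.factorial]
    push_cast
    ring
  rw [hgc, hgd, Real.norm_eq_abs] at key
  rw [abs_sub_comm]
  calc |f d + (c - d) * iteratedDerivWithin 1 f (Icc a b) d
      + (c - d) ^ 2 / 2 * iteratedDerivWithin 2 f (Icc a b) d - f c|
      ≤ 1 / 2 * (d - c) ^ 2 * M * (d - c) := key
    _ = M * (d - c) ^ 3 / 2 := by ring

/-- first-order accuracy of the corrected second difference at an irregular
node: with `ξ = x₀ + h − s`, `J = [[u]](s) + ξ [[u']](s) + ξ²/2 [[u'']](s)` and `M₃` a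
bound for the third derivatives of `u⁺`, `u⁻` on `[x₀ − h, x₀ + h]`, the corrected second
difference of the piecewise function `u` approximates `(u⁺)''(x₀)` with error `≤ M₃ h`. -/
theorem corrected_second_difference_first_order
    (h x₀ s : ℝ) (hh : 0 < h) (hs : s ∈ Set.Ioo x₀ (x₀ + h))
    (up um u : ℝ → ℝ)
    (hup : ContDiffOn ℝ 3 up (Set.Icc (x₀ - h) (x₀ + h)))
    (hum : ContDiffOn ℝ 3 um (Set.Icc (x₀ - h) (x₀ + h)))
    (hu₁ : ∀ x, x ≤ s → u x = up x)
    (hu₂ : ∀ x, s < x → u x = um x)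
    (M₃ : ℝ)
    (hM : ∀ x ∈ Set.Icc (x₀ - h) (x₀ + h),
      |iteratedDerivWithin 3 up (Set.Icc (x₀ - h) (x₀ + h)) x| ≤ M₃ ∧
      |iteratedDerivWithin 3 um (Set.Icc (x₀ - h) (x₀ + h)) x| ≤ M₃) :
    |(u (x₀ - h) - 2 * u x₀ + u (x₀ + h)
        + ((up s - um s)
          + (x₀ + h - s)
            * (iteratedDerivWithin 1 up (Set.Icc (x₀ - h) (x₀ + h)) s
                - iteratedDerivWithin 1 um (Set.Icc (x₀ - h) (x₀ + h)) s)
          + (1 / 2) * (x₀ + h - s) ^ 2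
            * (iteratedDerivWithin 2 up (Set.Icc (x₀ - h) (x₀ + h)) s
                - iteratedDerivWithin 2 um (Set.Icc (x₀ - h) (x₀ + h)) s))) / h ^ 2
      - iteratedDerivWithin 2 up (Set.Icc (x₀ - h) (x₀ + h)) x₀| ≤ M₃ * h := by
  obtain ⟨hs1, hs2⟩ := hs
  set S := Set.Icc (x₀ - h) (x₀ + h) with hS
  have hx₀S : x₀ ∈ S := ⟨by linarith, by linarith⟩
  have haS : x₀ - h ∈ S := ⟨le_refl _, by linarith⟩
  have hbS : x₀ + h ∈ S := ⟨by linarith, le_refl _⟩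
  have hsS : s ∈ S := ⟨by linarith, hs2.le⟩
  have hMup : ∀ y ∈ S, |iteratedDerivWithin 3 up S y| ≤ M₃ := fun y hy => (hM y hy).1
  have hMum : ∀ y ∈ S, |iteratedDerivWithin 3 um S y| ≤ M₃ := fun y hy => (hM y hy).2
  have hM0 : 0 ≤ M₃ := le_trans (abs_nonneg _) (hMup x₀ hx₀S)
  -- rewrite u values
  rw [hu₁ (x₀ - h) (by linarith), hu₁ x₀ hs1.le, hu₂ (x₀ + h) hs2]
  set p1s := iteratedDerivWithin 1 up S s
  set p2s := iteratedDerivWithin 2 up S s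
  set m1s := iteratedDerivWithin 1 um S s
  set m2s := iteratedDerivWithin 2 um S s
  set p1 := iteratedDerivWithin 1 up S x₀
  set p2 := iteratedDerivWithin 2 up S x₀
  -- the four Taylor estimates
  have hE₁ := taylor2_right_aux (f := up) (a := x₀ - h) (b := x₀ + h) (M := M₃)
    (c := x₀) (d := x₀ + h) (by linarith) hx₀S hbS hup hMup
  have hE₂ := taylor2_left_aux (f := up) (a := x₀ - h) (b := x₀ + h) (M := M₃)
    (c := x₀ - h) (d := x₀) (by linarith) haS hx₀S hup hMup
  have hE₃ := taylor2_right_aux (f := up) (a := x₀ - h) (b := x₀ + h) (M := M₃)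
    (c := s) (d := x₀ + h) hs2 hsS hbS hup hMup
  have hE₄ := taylor2_right_aux (f := um) (a := x₀ - h) (b := x₀ + h) (M := M₃)
    (c := s) (d := x₀ + h) hs2 hsS hbS hum hMum
  have hξh : (x₀ + h - s) ^ 3 ≤ h ^ 3 := by
    apply pow_le_pow_left₀ (by linarith) (by linarith)
  have hhe : x₀ + h - x₀ = h := by ring
  have hhe2 : x₀ - h - x₀ = -h := by ring
  rw [hhe] at hE₁
  rw [hhe2] at hE₂
  set ξ := x₀ + h - s with hξ
  -- key estimate on the numerator
  have key : |(up (x₀ - h) - 2 * up x₀ + um (x₀ + h)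
      + ((up s - um s) + ξ * (p1s - m1s) + (1 / 2) * ξ ^ 2 * (p2s - m2s)))
      - h ^ 2 * p2| ≤ M₃ * h ^ 3 := by
    have hiden : (up (x₀ - h) - 2 * up x₀ + um (x₀ + h)
        + ((up s - um s) + ξ * (p1s - m1s) + (1 / 2) * ξ ^ 2 * (p2s - m2s)))
        - h ^ 2 * p2
        = (up (x₀ - h) - (up x₀ + (-h) * p1 + (-h) ^ 2 / 2 * p2))
          + (up (x₀ + h) - (up x₀ + h * p1 + h ^ 2 / 2 * p2))
          + ((um (x₀ + h) - (um s + ξ * m1s + ξ ^ 2 / 2 * m2s))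
            - (up (x₀ + h) - (up s + ξ * p1s + ξ ^ 2 / 2 * p2s))) := by
      ring
    rw [hiden]
    have T : |(up (x₀ - h) - (up x₀ + (-h) * p1 + (-h) ^ 2 / 2 * p2))
          + (up (x₀ + h) - (up x₀ + h * p1 + h ^ 2 / 2 * p2))
          + ((um (x₀ + h) - (um s + ξ * m1s + ξ ^ 2 / 2 * m2s))
            - (up (x₀ + h) - (up s + ξ * p1s + ξ ^ 2 / 2 * p2s)))|
        ≤ M₃ * h ^ 3 / 2 + M₃ * h ^ 3 / 6 + (M₃ * ξ ^ 3 / 6 + M₃ * ξ ^ 3 / 6) := by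
      have t1 := abs_add_le (up (x₀ - h) - (up x₀ + (-h) * p1 + (-h) ^ 2 / 2 * p2)
          + (up (x₀ + h) - (up x₀ + h * p1 + h ^ 2 / 2 * p2)))
          ((um (x₀ + h) - (um s + ξ * m1s + ξ ^ 2 / 2 * m2s))
            - (up (x₀ + h) - (up s + ξ * p1s + ξ ^ 2 / 2 * p2s)))
      have t2 := abs_add_le (up (x₀ - h) - (up x₀ + (-h) * p1 + (-h) ^ 2 / 2 * p2))
          (up (x₀ + h) - (up x₀ + h * p1 + h ^ 2 / 2 * p2))
      have t3 := abs_sub (um (x₀ + h) - (um s + ξ * m1s + ξ ^ 2 / 2 * m2s))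
          (up (x₀ + h) - (up s + ξ * p1s + ξ ^ 2 / 2 * p2s))
      have b2 : |up (x₀ - h) - (up x₀ + (-h) * p1 + (-h) ^ 2 / 2 * p2)| ≤ M₃ * h ^ 3 / 2 := by
        have : x₀ - (x₀ - h) = h := by ring
        rw [this] at hE₂; exact hE₂
      have b1 : |up (x₀ + h) - (up x₀ + h * p1 + h ^ 2 / 2 * p2)| ≤ M₃ * h ^ 3 / 6 := hE₁
      have b4 : |um (x₀ + h) - (um s + ξ * m1s + ξ ^ 2 / 2 * m2s)| ≤ M₃ * ξ ^ 3 / 6 := hE₄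
      have b3 : |up (x₀ + h) - (up s + ξ * p1s + ξ ^ 2 / 2 * p2s)| ≤ M₃ * ξ ^ 3 / 6 := hE₃
      calc |_ + _| ≤ _ := t1
        _ ≤ (M₃ * h ^ 3 / 2 + M₃ * h ^ 3 / 6) + (M₃ * ξ ^ 3 / 6 + M₃ * ξ ^ 3 / 6) := by
            apply add_le_add (le_trans t2 (add_le_add b2 b1)) (le_trans t3 (add_le_add b4 b3))
        _ = M₃ * h ^ 3 / 2 + M₃ * h ^ 3 / 6 + (M₃ * ξ ^ 3 / 6 + M₃ * ξ ^ 3 / 6) := by ring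
    calc |_| ≤ M₃ * h ^ 3 / 2 + M₃ * h ^ 3 / 6 + (M₃ * ξ ^ 3 / 6 + M₃ * ξ ^ 3 / 6) := T
      _ ≤ M₃ * h ^ 3 / 2 + M₃ * h ^ 3 / 6 + (M₃ * h ^ 3 / 6 + M₃ * h ^ 3 / 6) := by
          gcongr
      _ = M₃ * h ^ 3 := by ring
  -- conclude
  have hh2 : (0 : ℝ) < h ^ 2 := by positivity
  have hrw : (up (x₀ - h) - 2 * up x₀ + um (x₀ + h)
      + ((up s - um s) + ξ * (p1s - m1s) + (1 / 2) * ξ ^ 2 * (p2s - m2s))) / h ^ 2 - p2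
      = ((up (x₀ - h) - 2 * up x₀ + um (x₀ + h)
      + ((up s - um s) + ξ * (p1s - m1s) + (1 / 2) * ξ ^ 2 * (p2s - m2s))) - h ^ 2 * p2) / h ^ 2 := by
    field_simp
  rw [hrw, abs_div, abs_of_pos hh2]
  rw [div_le_iff₀ hh2]
  calc |_| ≤ M₃ * h ^ 3 := key
    _ = M₃ * h * h ^ 2 := by ring
end

section
/- First-order accuracy of the corrected pressure difference at an irregular node: let h > 0, a ∈ ℝ, b = a + h, and s ∈ (a, b). Let p⁺, p⁻ : ℝ → ℝ be twice continuously differentiable on [a, b], and define p(x) = p⁺(x) for x ≤ s and p(x) = p⁻(x) for x > s. Set ξ = b − s, J = [[p]](s) + ξ [[p']](s), and let M₂ be the maximum over [a, b] of |(p⁺)''| and |(p⁻)''|. Then |(p(b) − p(a) + J)/h − (p⁺)'((a + b)/2)| ≤ 2 M₂ h. -/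
open Set

private lemma iterDW_congr_set {n : ℕ} {f : ℝ → ℝ} {s t : Set ℝ} {x : ℝ}
    (hst : s =ᶠ[nhds x] t) :
    iteratedDerivWithin n f s x = iteratedDerivWithin n f t x := by
  simp only [iteratedDerivWithin_eq_iteratedFDerivWithin,
    iteratedFDerivWithin_congr_set hst n]

private lemma taylor_one_bound {a b s M : ℝ} {f : ℝ → ℝ}
    (has : a < s) (hsb : s < b)
    (hf : ContDiffOn ℝ 2 f (Icc a b))
    (hM : ∀ x ∈ Icc a b, |iteratedDerivWithin 2 f (Icc a b) x| ≤ M) :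
    |f b - f s - (b - s) * iteratedDerivWithin 1 f (Icc a b) s| ≤ M / 2 * (b - s) ^ 2 := by
  have hab : a < b := has.trans hsb
  have hsub : Icc s b ⊆ Icc a b := Icc_subset_Icc has.le le_rfl
  have hset : ∀ z ∈ Ioo s b, Icc s b =ᶠ[nhds z] Icc a b := by
    intro z hz
    apply Filter.eventuallyEq_set.2
    filter_upwards [Ioo_mem_nhds hz.1 hz.2] with y hy
    constructor
    · intro h'; exact hsub h'
    · intro _; exact Ioo_subset_Icc_self hy
  have hgdiff : DifferentiableOn ℝ (iteratedDerivWithin 1 f (Icc a b)) (Icc a b) :=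
    hf.differentiableOn_iteratedDerivWithin (by norm_num) (uniqueDiffOn_Icc hab)
  have hdiff : DifferentiableOn ℝ (iteratedDerivWithin 1 f (Icc s b)) (Ioo s b) := by
    have h1 : DifferentiableOn ℝ (iteratedDerivWithin 1 f (Icc a b)) (Ioo s b) :=
      hgdiff.mono (fun y hy => hsub (Ioo_subset_Icc_self hy))
    exact h1.congr (fun y hy => iterDW_congr_set (hset y hy))
  have hcd : ContDiffOn ℝ 1 f (Icc s b) := (hf.of_le one_le_two).mono hsub
  obtain ⟨x', hx', hT⟩ := taylor_mean_remainder_lagrange (n := 1) hsb.ne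
    (by rw [uIcc_of_le hsb.le]; exact_mod_cast hcd)
    (by rw [uIcc_of_le hsb.le, uIoo_of_le hsb.le]; exact hdiff)
  rw [uIoo_of_le hsb.le] at hx'
  rw [uIcc_of_le hsb.le] at hT
  -- rewrite the Taylor polynomial
  have hpoly : taylorWithinEval f 1 (Icc s b) s b
      = f s + (b - s) * iteratedDerivWithin 1 f (Icc s b) s := by
    rw [taylorWithinEval_succ, taylor_within_zero_eval]
    norm_num
  -- identify derivatives at s
  have hds : DifferentiableAt ℝ f s :=
    (hf.contDiffAt (Icc_mem_nhds has hsb)).differentiableAt two_ne_zero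
  have hd1 : iteratedDerivWithin 1 f (Icc s b) s = iteratedDerivWithin 1 f (Icc a b) s := by
    rw [iteratedDerivWithin_one,
      iteratedDerivWithin_one,
      hds.derivWithin ((uniqueDiffOn_Icc hsb) s (left_mem_Icc.2 hsb.le)),
      hds.derivWithin ((uniqueDiffOn_Icc hab) s ⟨has.le, hsb.le⟩)]
  have hd2 : iteratedDerivWithin 2 f (Icc s b) x' = iteratedDerivWithin 2 f (Icc a b) x' :=
    iterDW_congr_set (hset x' hx')
  have hx'I : x' ∈ Icc a b := hsub (Ioo_subset_Icc_self hx')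
  have hbound := hM x' hx'I
  rw [hpoly, hd1, hd2] at hT
  norm_num [Nat.factorial] at hT
  have heq : f b - f s - (b - s) * iteratedDerivWithin 1 f (Icc a b) s
      = iteratedDerivWithin 2 f (Icc a b) x' * (b - s) ^ 2 / 2 := by
    rw [iteratedDerivWithin_one]; linarith
  rw [heq, abs_div, abs_mul, abs_pow, sq_abs, abs_of_nonneg (by norm_num : (0:ℝ) ≤ 2),
    div_le_iff₀ (by norm_num : (0:ℝ) < 2)]
  nlinarith [hbound, sq_nonneg (b - s)]


/-- first-order accuracy of the corrected pressure difference at an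
irregular node: with `b = a + h`, `ξ = b − s`, `J = [[p]](s) + ξ [[p']](s)` and `M₂` a
bound for the second derivatives of `p⁺`, `p⁻` on `[a, b]`, the corrected difference of
the piecewise function `p` approximates `(p⁺)'((a+b)/2)` with error `≤ 2 M₂ h`. -/
theorem corrected_pressure_difference_first_order
    (h a s : ℝ) (hh : 0 < h) (hs : s ∈ Set.Ioo a (a + h))
    (pp pm p : ℝ → ℝ)
    (hpp : ContDiffOn ℝ 2 pp (Set.Icc a (a + h)))
    (hpm : ContDiffOn ℝ 2 pm (Set.Icc a (a + h)))
    (hp₁ : ∀ x, x ≤ s → p x = pp x)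
    (hp₂ : ∀ x, s < x → p x = pm x)
    (M₂ : ℝ)
    (hM : ∀ x ∈ Set.Icc a (a + h),
      |iteratedDerivWithin 2 pp (Set.Icc a (a + h)) x| ≤ M₂ ∧
      |iteratedDerivWithin 2 pm (Set.Icc a (a + h)) x| ≤ M₂) :
    |(p (a + h) - p a
        + ((pp s - pm s)
          + (a + h - s)
            * (iteratedDerivWithin 1 pp (Set.Icc a (a + h)) s
                - iteratedDerivWithin 1 pm (Set.Icc a (a + h)) s))) / h
      - iteratedDerivWithin 1 pp (Set.Icc a (a + h)) ((a + (a + h)) / 2)| ≤ 2 * M₂ * h := by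
  obtain ⟨has, hsb⟩ := hs
  have hab : a < a + h := by linarith
  set I := Set.Icc a (a + h) with hI
  have hMpos : 0 ≤ M₂ := le_trans (abs_nonneg _) (hM a ⟨le_rfl, hab.le⟩).1
  -- Taylor bounds at s
  have hA := taylor_one_bound has hsb hpm (fun x hx => (hM x hx).2)
  have hB := taylor_one_bound has hsb hpp (fun x hx => (hM x hx).1)
  -- mean value theorem for pp on (a, a+h)
  have hcont : ContinuousOn pp I := hpp.continuousOn
  have hder : ∀ x ∈ Set.Ioo a (a + h), HasDerivAt pp (deriv pp x) x := fun x hx =>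
    ((hpp.contDiffAt (Icc_mem_nhds hx.1 hx.2)).differentiableAt two_ne_zero).hasDerivAt
  obtain ⟨c, hc, hslope⟩ := exists_hasDerivAt_eq_slope pp (deriv pp) hab hcont hder
  have hgc : iteratedDerivWithin 1 pp I c = deriv pp c := by
    rw [iteratedDerivWithin_one,
      derivWithin_of_mem_nhds (Icc_mem_nhds hc.1 hc.2)]
  have hppb : pp (a + h) - pp a = h * iteratedDerivWithin 1 pp I c := by
    rw [hgc, hslope, add_sub_cancel_left]
    field_simp
  -- Lipschitz bound for the first derivative of pp
  have hgdiff : DifferentiableOn ℝ (iteratedDerivWithin 1 pp I) I :=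
    hpp.differentiableOn_iteratedDerivWithin (by norm_num) (uniqueDiffOn_Icc hab)
  have hlip : ∀ x ∈ I, ∀ y ∈ I,
      |iteratedDerivWithin 1 pp I y - iteratedDerivWithin 1 pp I x| ≤ M₂ * |y - x| := by
    intro x hx y hy
    have := Convex.norm_image_sub_le_of_norm_hasDerivWithin_le
      (f := iteratedDerivWithin 1 pp I) (f' := iteratedDerivWithin 2 pp I)
      (fun z hz => by
        have hz' := (hgdiff z hz).hasDerivWithinAt
        rwa [← iteratedDerivWithin_succ] at hz')
      (fun z hz => by simpa [Real.norm_eq_abs] using (hM z hz).1)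
      (convex_Icc a (a + h)) hx hy
    simpa [Real.norm_eq_abs] using this
  -- locations
  have hmI : (a + (a + h)) / 2 ∈ I := ⟨by linarith, by linarith⟩
  have hcI : c ∈ I := Ioo_subset_Icc_self hc
  have hcm : |iteratedDerivWithin 1 pp I c - iteratedDerivWithin 1 pp I ((a + (a + h)) / 2)|
      ≤ M₂ * (h / 2) := by
    refine (hlip _ hmI c hcI).trans ?_
    have : |c - (a + (a + h)) / 2| ≤ h / 2 := by
      rw [abs_le]; constructor <;> [linarith [hc.1]; linarith [hc.2]]
    exact mul_le_mul_of_nonneg_left this hMpos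
  -- rewrite piecewise values
  rw [hp₂ (a + h) hsb, hp₁ a has.le]
  -- decompose
  have key : (pm (a + h) - pp a
        + ((pp s - pm s)
          + (a + h - s) * (iteratedDerivWithin 1 pp I s - iteratedDerivWithin 1 pm I s))) / h
      - iteratedDerivWithin 1 pp I ((a + (a + h)) / 2)
      = ((pm (a + h) - pm s - (a + h - s) * iteratedDerivWithin 1 pm I s)
          - (pp (a + h) - pp s - (a + h - s) * iteratedDerivWithin 1 pp I s)) / h
        + (iteratedDerivWithin 1 pp I c - iteratedDerivWithin 1 pp I ((a + (a + h)) / 2)) := by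
    have : pp (a + h) = pp a + h * iteratedDerivWithin 1 pp I c := by linarith
    rw [this]
    field_simp
    ring
  rw [key]
  set A := pm (a + h) - pm s - (a + h - s) * iteratedDerivWithin 1 pm I s with hAe
  set B := pp (a + h) - pp s - (a + h - s) * iteratedDerivWithin 1 pp I s with hBe
  have hAB : |A - B| ≤ M₂ * (a + h - s) ^ 2 := by
    rw [sub_eq_add_neg]
    refine (abs_add_le _ _).trans ?_
    rw [abs_neg]; linarith
  have hfin1 : |A - B| / h ≤ M₂ * h := by
    rw [div_le_iff₀ hh]
    have h1 : (0:ℝ) ≤ M₂ * ((s - a) * (h + (a + h - s))) :=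
      mul_nonneg hMpos (mul_nonneg (by linarith) (by linarith))
    nlinarith [hAB]
  calc |_ + _| ≤ |(A - B) / h| +
        |iteratedDerivWithin 1 pp I c - iteratedDerivWithin 1 pp I ((a + (a + h)) / 2)| :=
          abs_add_le _ _
    _ ≤ M₂ * h + M₂ * (h / 2) := by
        refine add_le_add ?_ hcm
        rwa [abs_div, abs_of_pos hh]
    _ ≤ 2 * M₂ * h := by nlinarith [mul_nonneg hMpos hh.le]
end

section
/- Second-order accuracy of the corrected divergence difference at an irregular node: let h > 0, a ∈ ℝ, b = a + h, and s ∈ (a, b). Let u⁺, u⁻ : ℝ → ℝ be three times continuously differentiable on [a, b], and define u(x) = u⁻(x) for x < s and u(x) = u⁺(x) for x ≥ s. Set ξ = a − s, J = [[u]](s) + ξ [[u']](s) + (1/2) ξ² [[u'']](s), and let M₃ be the maximum over [a, b] of |(u⁺)'''| and |(u⁻)'''|. Then |(u(b) − u(a) − J)/h − (u⁺)'((a + b)/2)| ≤ M₃ h². -/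
open Set Nat

/-- Two-sided Taylor remainder bound with the sharp `1/(n+1)!` constant. -/
lemma taylor_bound_two_sided {f : ℝ → ℝ} {A B C x₀ x : ℝ} {n : ℕ} (hAB : A < B)
    (hf : ContDiffOn ℝ (n + 1) f (Set.Icc A B)) (hx₀ : x₀ ∈ Set.Icc A B)
    (hx : x ∈ Set.Icc A B)
    (hC : ∀ y ∈ Set.Icc A B, |iteratedDerivWithin (n + 1) f (Set.Icc A B) y| ≤ C) :
    |f x - taylorWithinEval f n (Set.Icc A B) x₀ x| ≤
      C * |x - x₀| ^ (n + 1) / ((n + 1)! : ℝ) := by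
  have hC0 : 0 ≤ C := (abs_nonneg _).trans (hC x₀ hx₀)
  have hU := uniqueDiffOn_Icc hAB
  have hf' : DifferentiableOn ℝ (iteratedDerivWithin n f (Set.Icc A B)) (Set.Icc A B) :=
    hf.differentiableOn_iteratedDerivWithin (by exact_mod_cast Nat.lt_succ_self n) hU
  have hgc : ContinuousOn (fun t => taylorWithinEval f n (Set.Icc A B) t x) (Set.Icc A B) :=
    continuousOn_taylorWithinEval hU hf.of_succ
  have hgd : ∀ t ∈ Set.Icc A B,
      HasDerivWithinAt (fun y => taylorWithinEval f n (Set.Icc A B) y x)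
        (((n ! : ℝ)⁻¹ * (x - t) ^ n) • iteratedDerivWithin (n + 1) f (Set.Icc A B) t)
        (Set.Icc A B) t := fun t ht =>
    hasDerivWithinAt_taylorWithinEval_at_Icc x hAB ht hf.of_succ hf'
  have hfact : ((n + 1)! : ℝ) = (n + 1) * (n ! : ℝ) := by
    rw [Nat.factorial_succ]; push_cast; ring
  have hfactpos : (0 : ℝ) < (n ! : ℝ) := by exact_mod_cast n.factorial_pos
  rcases le_total x₀ x with hle | hle
  · have key : ∀ ⦃y⦄, y ∈ Set.Icc x₀ x →
        ‖taylorWithinEval f n (Set.Icc A B) y x - taylorWithinEval f n (Set.Icc A B) x₀ x‖ ≤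
          C / ((n + 1)! : ℝ) * ((x - x₀) ^ (n + 1) - (x - y) ^ (n + 1)) := by
      apply image_norm_le_of_norm_deriv_right_le_deriv_boundary
        (f := fun y => taylorWithinEval f n (Set.Icc A B) y x -
          taylorWithinEval f n (Set.Icc A B) x₀ x)
        (f' := fun y => ((n ! : ℝ)⁻¹ * (x - y) ^ n) • iteratedDerivWithin (n + 1) f (Set.Icc A B) y)
        (B := fun y => C / ((n + 1)! : ℝ) * ((x - x₀) ^ (n + 1) - (x - y) ^ (n + 1)))
        (B' := fun y => C / (n ! : ℝ) * (x - y) ^ n)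
      · exact (hgc.mono (Set.Icc_subset_Icc hx₀.1 hx.2)).sub continuousOn_const
      · intro y hy
        have hyI : y ∈ Set.Icc A B := ⟨hx₀.1.trans hy.1, hy.2.le.trans hx.2⟩
        have hmem : Set.Icc A B ∈ nhdsWithin y (Set.Ici y) :=
          Icc_mem_nhdsGE_of_mem ⟨hyI.1, lt_of_lt_of_le hy.2 hx.2⟩
        exact ((hgd y hyI).mono_of_mem_nhdsWithin hmem).sub_const _
      · simp
      · intro y
        have h1 : HasDerivAt (fun y => (x - y) ^ (n + 1)) (-(n + 1) * (x - y) ^ n) y :=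
          monomial_has_deriv_aux y x n
        have h2 : HasDerivAt
            (fun y => C / ((n + 1)! : ℝ) * ((x - x₀) ^ (n + 1) - (x - y) ^ (n + 1)))
            (C / ((n + 1)! : ℝ) * (0 - (-(n + 1) * (x - y) ^ n))) y :=
          ((hasDerivAt_const y _).sub h1).const_mul _
        convert h2 using 1
        rw [hfact]
        field_simp
        ring
      · intro y hy
        have hyI : y ∈ Set.Icc A B := ⟨hx₀.1.trans hy.1, hy.2.le.trans hx.2⟩
        have hxy : (0 : ℝ) ≤ x - y := sub_nonneg.2 hy.2.le
        rw [norm_smul, Real.norm_eq_abs, Real.norm_eq_abs, abs_mul, abs_inv, Nat.abs_cast,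
          abs_pow, abs_of_nonneg hxy]
        calc (n ! : ℝ)⁻¹ * (x - y) ^ n * |iteratedDerivWithin (n + 1) f (Set.Icc A B) y|
            ≤ (n ! : ℝ)⁻¹ * (x - y) ^ n * C := by
              apply mul_le_mul_of_nonneg_left (hC y hyI)
              positivity
          _ = C / (n ! : ℝ) * (x - y) ^ n := by field_simp
    have hx_mem : x ∈ Set.Icc x₀ x := Set.right_mem_Icc.mpr hle
    have := key hx_mem
    rw [taylorWithinEval_self] at this
    rw [Real.norm_eq_abs] at this
    calc |f x - taylorWithinEval f n (Set.Icc A B) x₀ x| ≤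
        C / ((n + 1)! : ℝ) * ((x - x₀) ^ (n + 1) - (x - x) ^ (n + 1)) := this
      _ = C * |x - x₀| ^ (n + 1) / ((n + 1)! : ℝ) := by
          rw [abs_of_nonneg (sub_nonneg.2 hle)]
          rw [sub_self, zero_pow (Nat.succ_ne_zero n)]
          ring
  · have key : ∀ ⦃y⦄, y ∈ Set.Icc x x₀ →
        ‖taylorWithinEval f n (Set.Icc A B) y x - taylorWithinEval f n (Set.Icc A B) x x‖ ≤
          C / ((n + 1)! : ℝ) * (y - x) ^ (n + 1) := by
      apply image_norm_le_of_norm_deriv_right_le_deriv_boundary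
        (f := fun y => taylorWithinEval f n (Set.Icc A B) y x -
          taylorWithinEval f n (Set.Icc A B) x x)
        (f' := fun y => ((n ! : ℝ)⁻¹ * (x - y) ^ n) • iteratedDerivWithin (n + 1) f (Set.Icc A B) y)
        (B := fun y => C / ((n + 1)! : ℝ) * (y - x) ^ (n + 1))
        (B' := fun y => C / (n ! : ℝ) * (y - x) ^ n)
      · exact (hgc.mono (Set.Icc_subset_Icc hx.1 hx₀.2)).sub continuousOn_const
      · intro y hy
        have hyI : y ∈ Set.Icc A B := ⟨hx.1.trans hy.1, hy.2.le.trans hx₀.2⟩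
        have hmem : Set.Icc A B ∈ nhdsWithin y (Set.Ici y) :=
          Icc_mem_nhdsGE_of_mem ⟨hyI.1, lt_of_lt_of_le hy.2 hx₀.2⟩
        exact ((hgd y hyI).mono_of_mem_nhdsWithin hmem).sub_const _
      · simp
      · intro y
        have h1 : HasDerivAt (fun y => (y - x) ^ (n + 1))
            ((n + 1 : ℕ) * (y - x) ^ ((n + 1) - 1) * 1) y :=
          ((hasDerivAt_id y).sub_const x).pow (n + 1)
        have h2 : HasDerivAt (fun y => C / ((n + 1)! : ℝ) * (y - x) ^ (n + 1))
            (C / ((n + 1)! : ℝ) * ((n + 1 : ℕ) * (y - x) ^ ((n + 1) - 1) * 1)) y :=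
          h1.const_mul _
        convert h2 using 1
        rw [hfact]
        simp only [Nat.add_sub_cancel]
        push_cast
        field_simp
      · intro y hy
        have hyI : y ∈ Set.Icc A B := ⟨hx.1.trans hy.1, hy.2.le.trans hx₀.2⟩
        have hxy : (0 : ℝ) ≤ y - x := sub_nonneg.2 hy.1
        rw [norm_smul, Real.norm_eq_abs, Real.norm_eq_abs, abs_mul, abs_inv, Nat.abs_cast,
          abs_pow, abs_sub_comm, abs_of_nonneg hxy]
        calc (n ! : ℝ)⁻¹ * (y - x) ^ n * |iteratedDerivWithin (n + 1) f (Set.Icc A B) y|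
            ≤ (n ! : ℝ)⁻¹ * (y - x) ^ n * C := by
              apply mul_le_mul_of_nonneg_left (hC y hyI)
              positivity
          _ = C / (n ! : ℝ) * (y - x) ^ n := by field_simp
    have hx₀_mem : x₀ ∈ Set.Icc x x₀ := Set.right_mem_Icc.mpr hle
    have := key hx₀_mem
    rw [taylorWithinEval_self] at this
    rw [Real.norm_eq_abs, abs_sub_comm] at this
    calc |f x - taylorWithinEval f n (Set.Icc A B) x₀ x| ≤
        C / ((n + 1)! : ℝ) * (x₀ - x) ^ (n + 1) := this
      _ = C * |x - x₀| ^ (n + 1) / ((n + 1)! : ℝ) := by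
          rw [abs_sub_comm, abs_of_nonneg (sub_nonneg.2 hle)]
          ring

/-- second-order accuracy of the corrected divergence difference at an
irregular node: with `b = a + h`, `ξ = a − s`, `J = [[u]](s) + ξ [[u']](s) + ξ²/2 [[u'']](s)`
and `M₃` a bound for the third derivatives of `u⁺`, `u⁻` on `[a, b]`, the corrected
difference of the piecewise function `u` (equal to `u⁻` for `x < s` and to `u⁺` for
`x ≥ s`) approximates `(u⁺)'((a+b)/2)` with error `≤ M₃ h²`. -/
theorem corrected_divergence_difference_second_order
    (h a s : ℝ) (hh : 0 < h) (hs : s ∈ Set.Ioo a (a + h))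
    (up um u : ℝ → ℝ)
    (hup : ContDiffOn ℝ 3 up (Set.Icc a (a + h)))
    (hum : ContDiffOn ℝ 3 um (Set.Icc a (a + h)))
    (hu₁ : ∀ x, x < s → u x = um x)
    (hu₂ : ∀ x, s ≤ x → u x = up x)
    (M₃ : ℝ)
    (hM : ∀ x ∈ Set.Icc a (a + h),
      |iteratedDerivWithin 3 up (Set.Icc a (a + h)) x| ≤ M₃ ∧
      |iteratedDerivWithin 3 um (Set.Icc a (a + h)) x| ≤ M₃) :
    |(u (a + h) - u a
        - ((up s - um s)
          + (a - s)
            * (iteratedDerivWithin 1 up (Set.Icc a (a + h)) s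
                - iteratedDerivWithin 1 um (Set.Icc a (a + h)) s)
          + (1 / 2) * (a - s) ^ 2
            * (iteratedDerivWithin 2 up (Set.Icc a (a + h)) s
                - iteratedDerivWithin 2 um (Set.Icc a (a + h)) s))) / h
      - iteratedDerivWithin 1 up (Set.Icc a (a + h)) ((a + (a + h)) / 2)| ≤ M₃ * h ^ 2 := by
  obtain ⟨hsa, hsb⟩ := hs
  have hab : a < a + h := by linarith
  have haI : a ∈ Set.Icc a (a + h) := ⟨le_refl a, by linarith⟩
  have hbI : a + h ∈ Set.Icc a (a + h) := ⟨by linarith, le_refl _⟩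
  have hsI : s ∈ Set.Icc a (a + h) := ⟨hsa.le, hsb.le⟩
  have hmI : (a + (a + h)) / 2 ∈ Set.Icc a (a + h) := ⟨by linarith, by linarith⟩
  have hup' : ContDiffOn ℝ ((2 : ℕ) + 1) up (Set.Icc a (a + h)) := by exact_mod_cast hup
  have hum' : ContDiffOn ℝ ((2 : ℕ) + 1) um (Set.Icc a (a + h)) := by exact_mod_cast hum
  have hCup : ∀ y ∈ Set.Icc a (a + h),
      |iteratedDerivWithin 3 up (Set.Icc a (a + h)) y| ≤ M₃ := fun y hy => (hM y hy).1
  have hCum : ∀ y ∈ Set.Icc a (a + h),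
      |iteratedDerivWithin 3 um (Set.Icc a (a + h)) y| ≤ M₃ := fun y hy => (hM y hy).2
  have R1 := taylor_bound_two_sided (n := 2) hab hup' hmI hbI hCup
  have R2 := taylor_bound_two_sided (n := 2) hab hup' hmI haI hCup
  have R3 := taylor_bound_two_sided (n := 2) hab hup' hsI haI hCup
  have R4 := taylor_bound_two_sided (n := 2) hab hum' hsI haI hCum
  have hm1 : |a + h - (a + (a + h)) / 2| = h / 2 := by
    rw [abs_of_nonneg (by linarith)]; ring
  have hm2 : |a - (a + (a + h)) / 2| = h / 2 := by
    rw [abs_of_nonpos (by linarith)]; ring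
  have hs1 : |a - s| = s - a := by
    rw [abs_of_nonpos (by linarith)]; ring
  have f6 : (((2 + 1)! : ℕ) : ℝ) = 6 := by norm_num [Nat.factorial]
  rw [hm1, f6] at R1
  rw [hm2, f6] at R2
  rw [hs1, f6] at R3
  rw [hs1, f6] at R4
  have hM0 : 0 ≤ M₃ := (abs_nonneg _).trans (hM a haI).1
  have hueq : u (a + h) = up (a + h) := hu₂ _ hsb.le
  have huaeq : u a = um a := hu₁ _ hsa
  have texp : ∀ (g : ℝ → ℝ) (c x : ℝ), taylorWithinEval g 2 (Set.Icc a (a + h)) c x =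
      g c + (x - c) * iteratedDerivWithin 1 g (Set.Icc a (a + h)) c
        + (x - c) ^ 2 / 2 * iteratedDerivWithin 2 g (Set.Icc a (a + h)) c := by
    intro g c x
    rw [taylor_within_apply]
    rw [Finset.sum_range_succ, Finset.sum_range_succ, Finset.sum_range_one]
    simp only [smul_eq_mul, iteratedDerivWithin_zero, pow_zero, pow_one, Nat.factorial,
      Nat.cast_ofNat, Nat.cast_one, mul_one, one_mul]
    ring
  have hiden : (u (a + h) - u a
        - ((up s - um s)
          + (a - s)
            * (iteratedDerivWithin 1 up (Set.Icc a (a + h)) s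
                - iteratedDerivWithin 1 um (Set.Icc a (a + h)) s)
          + (1 / 2) * (a - s) ^ 2
            * (iteratedDerivWithin 2 up (Set.Icc a (a + h)) s
                - iteratedDerivWithin 2 um (Set.Icc a (a + h)) s))) / h
      - iteratedDerivWithin 1 up (Set.Icc a (a + h)) ((a + (a + h)) / 2)
      = ((up (a + h) - taylorWithinEval up 2 (Set.Icc a (a + h)) ((a + (a + h)) / 2) (a + h))
        - (up a - taylorWithinEval up 2 (Set.Icc a (a + h)) ((a + (a + h)) / 2) a)
        + (up a - taylorWithinEval up 2 (Set.Icc a (a + h)) s a)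
        - (um a - taylorWithinEval um 2 (Set.Icc a (a + h)) s a)) / h := by
    rw [hueq, huaeq, texp, texp, texp, texp]
    field_simp
    ring
  rw [hiden]
  set e1 := up (a + h) - taylorWithinEval up 2 (Set.Icc a (a + h)) ((a + (a + h)) / 2) (a + h)
  set e2 := up a - taylorWithinEval up 2 (Set.Icc a (a + h)) ((a + (a + h)) / 2) a
  set e3 := up a - taylorWithinEval up 2 (Set.Icc a (a + h)) s a
  set e4 := um a - taylorWithinEval um 2 (Set.Icc a (a + h)) s a
  rw [abs_div, abs_of_pos hh]
  rw [div_le_iff₀ hh]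
  have tri : |e1 - e2 + e3 - e4| ≤ |e1| + |e2| + |e3| + |e4| := by
    have t1 := abs_sub (e1 - e2 + e3) e4
    have t2 := abs_add_le (e1 - e2) e3
    have t3 := abs_sub e1 e2
    linarith
  have hcube : (s - a) ^ 3 ≤ h ^ 3 :=
    pow_le_pow_left₀ (by linarith) (by linarith) 3
  have hcubeM : M₃ * (s - a) ^ 3 ≤ M₃ * h ^ 3 := mul_le_mul_of_nonneg_left hcube hM0
  have hh3 : (0 : ℝ) ≤ M₃ * h ^ 3 := by positivity
  nlinarith [R1, R2, R3, R4, tri, hcubeM, hh3]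
end
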